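/- arXiv:1208.3624 — 5 statements merged into one kernel-verified Lean document; each statement's English description precedes it below -/
import Mathlib

section
/- Let U ⊆ ℝⁿ and V ⊆ ℝᵐ be open sets, f : U → V and g : V → ℝᵖ be C^k maps (k ≥ 1) with finite C^k norms. Then ‖g ∘ f‖_{C^k} ≤ (1^k + 2^k + ⋯ + k^k) · ‖g‖_{C^k} · max(‖f‖_{C^k}, ‖f‖_{C^k}^k). -/
open Set

lemma iteratedFDerivWithin_sub_const' {E F : Type*} [NormedAddCommGroup E] [NormedSpace ℝ E]
    [NormedAddCommGroup F] [NormedSpace ℝ F]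
    {s : Set E} {g : E → F} {i : ℕ} (hi : i ≠ 0) (hg : ContDiffOn ℝ (i : ℕ∞) g s)
    (c : F) (hs : UniqueDiffOn ℝ s) {x : E} (hx : x ∈ s) :
    iteratedFDerivWithin ℝ i (fun y => g y - c) s x = iteratedFDerivWithin ℝ i g s x := by
  have h : (fun y => g y - c) = g + fun _ => -c := by ext y; simp [sub_eq_add_neg]
  rw [h, iteratedFDerivWithin_add_apply (hg x hx) contDiffWithinAt_const hs hx,
    iteratedFDerivWithin_const_of_ne hi _ s, Pi.zero_apply, add_zero]

/-- Composition bound for `C^k` norms: if the `C^k` norms (sup over the open set of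
operator norms of the `p`-th derivatives, `1 ≤ p ≤ k`) of `f` and `g` are bounded by
`Kf` and `Kg`, then the `C^k` norm of `g ∘ f` is bounded by
`(1^k + ⋯ + k^k) * Kg * max Kf (Kf^k)`. -/
theorem ck_norm_comp (n m q k : ℕ) (hk : 1 ≤ k)
    (U : Set (EuclideanSpace ℝ (Fin n))) (V : Set (EuclideanSpace ℝ (Fin m)))
    (hU : IsOpen U) (hV : IsOpen V)
    (f : EuclideanSpace ℝ (Fin n) → EuclideanSpace ℝ (Fin m))
    (g : EuclideanSpace ℝ (Fin m) → EuclideanSpace ℝ (Fin q))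
    (hfUV : MapsTo f U V)
    (hf : ContDiffOn ℝ k f U) (hg : ContDiffOn ℝ k g V)
    (Kf Kg : ℝ)
    (hKf : ∀ p, 1 ≤ p → p ≤ k → ∀ x ∈ U, ‖iteratedFDerivWithin ℝ p f U x‖ ≤ Kf)
    (hKg : ∀ p, 1 ≤ p → p ≤ k → ∀ y ∈ V, ‖iteratedFDerivWithin ℝ p g V y‖ ≤ Kg) :
    ∀ p, 1 ≤ p → p ≤ k → ∀ x ∈ U,
      ‖iteratedFDerivWithin ℝ p (g ∘ f) U x‖ ≤
        (∑ i ∈ Finset.Icc 1 k, (i : ℝ) ^ k) * Kg * max Kf (Kf ^ k) := by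
  intro p hp1 hpk x hx
  have hUu : UniqueDiffOn ℝ U := hU.uniqueDiffOn
  have hVu : UniqueDiffOn ℝ V := hV.uniqueDiffOn
  have hfxV : f x ∈ V := hfUV hx
  have hKg0 : 0 ≤ Kg := le_trans (norm_nonneg _) (hKg 1 le_rfl hk _ hfxV)
  have hKf0 : 0 ≤ Kf := le_trans (norm_nonneg _) (hKf 1 le_rfl hk _ hx)
  set c := g (f x) with hc
  set g' : EuclideanSpace ℝ (Fin m) → EuclideanSpace ℝ (Fin q) := fun y => g y - c with hg'def
  have hg' : ContDiffOn ℝ k g' V := hg.sub contDiffOn_const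
  -- the p-th derivative of g' ∘ f equals that of g ∘ f
  have hcomp : iteratedFDerivWithin ℝ p (g' ∘ f) U x = iteratedFDerivWithin ℝ p (g ∘ f) U x := by
    have h : (g' ∘ f) = fun y => (g ∘ f) y - c := by ext y; simp [hg'def]
    rw [h]
    exact iteratedFDerivWithin_sub_const' (by omega) (((hg.comp hf hfUV).of_le (by exact_mod_cast hpk))) c hUu hx
  -- bounds on derivatives of g'
  have hC : ∀ i, i ≤ p → ‖iteratedFDerivWithin ℝ i g' V (f x)‖ ≤ Kg := by
    intro i hi
    rcases Nat.eq_zero_or_pos i with rfl | hi1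
    · rw [norm_iteratedFDerivWithin_zero]
      simp [hg'def, hc, hKg0]
    · rw [iteratedFDerivWithin_sub_const' (show i ≠ 0 by omega) (hg.of_le (by exact_mod_cast le_trans hi hpk)) c hVu hfxV]
      exact hKg i hi1 (le_trans hi hpk) _ hfxV
  -- choose D
  have hfac : (p.factorial : ℝ) ≤ ∑ i ∈ Finset.Icc 1 k, (i : ℝ) ^ k := by
    have h1 : p.factorial ≤ p ^ k :=
      le_trans p.factorial_le_pow (Nat.pow_le_pow_right (by omega) hpk)
    have h2 : (p : ℝ) ^ k ≤ ∑ i ∈ Finset.Icc 1 k, (i : ℝ) ^ k := by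
      apply Finset.single_le_sum (f := fun i : ℕ => (i : ℝ) ^ k)
        (fun i _ => by positivity) (Finset.mem_Icc.2 ⟨hp1, hpk⟩)
    calc (p.factorial : ℝ) ≤ (p : ℝ) ^ k := by exact_mod_cast h1
      _ ≤ _ := h2
  have hsum0 : (0:ℝ) ≤ ∑ i ∈ Finset.Icc 1 k, (i : ℝ) ^ k :=
    Finset.sum_nonneg fun i _ => by positivity
  have key : ∀ D : ℝ, 0 ≤ D → (∀ i, 1 ≤ i → i ≤ p → Kf ≤ D ^ i) →
      D ^ p ≤ max Kf (Kf ^ k) →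
      ‖iteratedFDerivWithin ℝ p (g ∘ f) U x‖ ≤
        (∑ i ∈ Finset.Icc 1 k, (i : ℝ) ^ k) * Kg * max Kf (Kf ^ k) := by
    intro D hD0 hDi hDp
    rw [← hcomp]
    have := norm_iteratedFDerivWithin_comp_le (𝕜 := ℝ) (N := (k : WithTop ℕ∞)) hg' hf
      (by exact_mod_cast hpk) hVu hUu hfUV hx hC
      (fun i hi1 hip => le_trans (hKf i hi1 (le_trans hip hpk) x hx) (hDi i hi1 hip))
    refine le_trans this ?_
    have h1 : (p.factorial : ℝ) * Kg ≤ (∑ i ∈ Finset.Icc 1 k, (i : ℝ) ^ k) * Kg :=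
      mul_le_mul_of_nonneg_right hfac hKg0
    exact mul_le_mul h1 hDp (pow_nonneg hD0 p) (mul_nonneg hsum0 hKg0)
  rcases le_or_gt 1 Kf with hKf1 | hKf1
  · refine key Kf hKf0 (fun i hi1 _ => le_self_pow₀ hKf1 (by omega)) ?_
    exact le_trans (pow_le_pow_right₀ hKf1 hpk) (le_max_right _ _)
  rcases eq_or_lt_of_le hKf0 with hKfz | hKfpos
  · refine key 0 le_rfl (fun i hi1 _ => by rw [zero_pow (by omega)]; exact hKfz.ge) ?_
    rw [zero_pow (by omega)]
    exact le_max_of_le_left hKfz.le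
  · -- 0 < Kf < 1 : take D = Kf ^ (1/p)
    set D := Kf ^ ((p : ℝ)⁻¹) with hD
    have hp0 : (0:ℝ) < p := by exact_mod_cast hp1
    have hD0 : 0 ≤ D := Real.rpow_nonneg hKf0 _
    have hpow : ∀ i : ℕ, D ^ i = Kf ^ ((p:ℝ)⁻¹ * i) := by
      intro i
      rw [hD, ← Real.rpow_natCast (Kf ^ ((p : ℝ)⁻¹)) i, ← Real.rpow_mul hKf0]
    refine key D hD0 ?_ ?_
    · intro i hi1 hip
      rw [hpow]
      calc Kf = Kf ^ (1:ℝ) := (Real.rpow_one Kf).symm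
        _ ≤ Kf ^ ((p:ℝ)⁻¹ * i) := by
            apply Real.rpow_le_rpow_of_exponent_ge hKfpos hKf1.le
            have hip' : (i:ℝ) ≤ p := by exact_mod_cast hip
            rw [inv_mul_le_iff₀ hp0]
            linarith
    · rw [hpow, inv_mul_cancel₀ (ne_of_gt hp0), Real.rpow_one]
      exact le_max_left _ _
end

section
/- Let M be an invertible n × n real matrix and Σ the set of singular (non-invertible) n × n matrices. Then 1/‖M⁻¹‖ = dist(M, Σ), the distance measured in the operator norm. -/
/-- Eckart–Young equality: for an invertible linear operator `M` of `ℝⁿ`,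
`1/‖M⁻¹‖` equals the (operator-norm) distance from `M` to the set `Σ` of
singular (non-invertible) operators. -/
theorem eckart_young (n : ℕ)
    (M : EuclideanSpace ℝ (Fin n) →L[ℝ] EuclideanSpace ℝ (Fin n))
    (hM : IsUnit M) :
    1 / ‖Ring.inverse M‖ =
      Metric.infDist M
        {A : EuclideanSpace ℝ (Fin n) →L[ℝ] EuclideanSpace ℝ (Fin n) | ¬ IsUnit A} := by
  set E := EuclideanSpace ℝ (Fin n)
  rcases Nat.eq_zero_or_pos n with hn | hn
  · -- trivial dimension: both sides are 0
    subst hn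
    haveI : Subsingleton E := by
      exact ⟨fun x y => PiLp.ext fun i => i.elim0⟩
    haveI : Subsingleton (E →L[ℝ] E) := ⟨fun f g => ContinuousLinearMap.ext fun x => Subsingleton.elim _ _⟩
    have hempty : {A : E →L[ℝ] E | ¬ IsUnit A} = ∅ := by
      ext A
      simp only [Set.mem_setOf_eq, Set.mem_empty_iff_false, iff_false, not_not]
      exact isUnit_of_subsingleton A
    rw [hempty, Metric.infDist_empty, Subsingleton.elim (Ring.inverse M) 0, norm_zero]
    simp
  · haveI : Nonempty (Fin n) := ⟨⟨0, hn⟩⟩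
    haveI : Nontrivial E := (WithLp.equiv 2 (Fin n → ℝ)).nontrivial
    set N := Ring.inverse M with hN
    have hMN : M * N = 1 := Ring.mul_inverse_cancel M hM
    have hNM : N * M = 1 := Ring.inverse_mul_cancel M hM
    -- N ≠ 0
    have h10 : (1 : E →L[ℝ] E) ≠ 0 := by
      obtain ⟨x, hx⟩ := exists_ne (0 : E)
      intro h
      have := congrArg (fun f : E →L[ℝ] E => f x) h
      simp at this
      exact hx this
    have hNne : N ≠ 0 := by
      intro h
      rw [h, mul_zero] at hMN
      exact h10 hMN.symm
    have hNpos : 0 < ‖N‖ := norm_pos_iff.mpr hNne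
    -- norm-attaining unit vector for N
    obtain ⟨v, hv, hvmax⟩ := (isCompact_sphere (0:E) 1).exists_isMaxOn
      (NormedSpace.sphere_nonempty.mpr zero_le_one)
      (continuous_norm.comp N.continuous).continuousOn
    have hv1 : ‖v‖ = 1 := by simpa using hv
    have hNv : ‖N v‖ = ‖N‖ := by
      apply le_antisymm
      · simpa [hv1] using N.le_opNorm v
      · apply N.opNorm_le_bound (norm_nonneg _)
        intro x
        rcases eq_or_ne x 0 with rfl | hx
        · simp
        · have hxs : (‖x‖⁻¹ • x) ∈ Metric.sphere (0:E) 1 := by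
            simp [norm_smul, abs_of_nonneg (inv_nonneg.mpr (norm_nonneg x)),
              inv_mul_cancel₀ (norm_ne_zero_iff.mpr hx)]
          have := hvmax hxs
          simp only [Function.comp, Set.mem_setOf_eq, map_smul, norm_smul, norm_inv,
            norm_norm] at this
          have hxpos : 0 < ‖x‖ := norm_pos_iff.mpr hx
          calc ‖N x‖ = ‖x‖ * (‖x‖⁻¹ * ‖N x‖) := by field_simp
            _ ≤ ‖x‖ * ‖N v‖ := by nlinarith [norm_nonneg (N x)]
            _ = ‖N v‖ * ‖x‖ := mul_comm _ _
    set w : E := N v with hw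
    have hwpos : 0 < ‖w‖ := by rw [hw, hNv]; exact hNpos
    set u : E := ‖w‖⁻¹ • w with hu
    have hu1 : ‖u‖ = 1 := by
      rw [hu, norm_smul, norm_inv, norm_norm, inv_mul_cancel₀ hwpos.ne']
    have hMu : M u = ‖N‖⁻¹ • v := by
      have hMw : M w = v := by
        have := congrArg (fun f : E →L[ℝ] E => f v) hMN
        simpa [ContinuousLinearMap.mul_apply] using this
      rw [hu, map_smul, hMw, hw, hNv]
    set B : E →L[ℝ] E := (innerSL ℝ u).smulRight (M u) with hB
    have hBu : B u = M u := by
      rw [hB, ContinuousLinearMap.smulRight_apply, innerSL_apply_apply,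
        real_inner_self_eq_norm_mul_norm, hu1]
      simp
    have hBnorm : ‖B‖ = ‖N‖⁻¹ := by
      rw [hB, ContinuousLinearMap.norm_smulRight_apply, innerSL_apply_norm, hu1, one_mul,
        hMu, norm_smul, norm_inv, norm_norm, hv1, mul_one]
    set A : E →L[ℝ] E := M - B with hA
    have hAsing : ¬ IsUnit A := by
      intro h
      have hinv : Ring.inverse A * A = 1 := Ring.inverse_mul_cancel A h
      have hAu : A u = 0 := by
        rw [hA, ContinuousLinearMap.sub_apply, hBu, sub_self]
      have : u = 0 := by
        have h2 := congrArg (fun f : E →L[ℝ] E => f u) hinv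
        simpa [ContinuousLinearMap.mul_apply, hAu] using h2.symm
      rw [this, norm_zero] at hu1
      exact one_ne_zero hu1.symm
    have hSne : Set.Nonempty {A : E →L[ℝ] E | ¬ IsUnit A} := ⟨A, hAsing⟩
    rw [one_div]
    apply le_antisymm
    · -- lower bound: every singular operator is at distance ≥ ‖N‖⁻¹
      by_contra hlt
      push_neg at hlt
      obtain ⟨C, hC, hdist⟩ := (Metric.infDist_lt_iff hSne).mp hlt
      apply hC
      have hcoe : (hM.unit : E →L[ℝ] E) = M := hM.unit_spec
      have hinvcoe : ((hM.unit⁻¹ : (E →L[ℝ] E)ˣ) : E →L[ℝ] E) = N := by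
        conv_rhs => rw [hN, ← hcoe]
        exact (Ring.inverse_unit hM.unit).symm
      have h' : ‖C - (hM.unit : E →L[ℝ] E)‖ < ‖((hM.unit⁻¹ : (E →L[ℝ] E)ˣ) : E →L[ℝ] E)‖⁻¹ := by
        rw [hcoe, hinvcoe, ← norm_sub_rev]
        rw [dist_eq_norm] at hdist
        exact hdist
      exact ⟨Units.ofNearby hM.unit C h', by simp⟩
    · -- upper bound: A is singular and at distance ‖N‖⁻¹
      calc Metric.infDist M {A : E →L[ℝ] E | ¬ IsUnit A} ≤ dist M A :=
            Metric.infDist_le_dist_of_mem hAsing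
        _ = ‖B‖ := by rw [dist_eq_norm, hA, sub_sub_cancel]
        _ = ‖N‖⁻¹ := hBnorm
end

section
/- Let F : ℝᵐ × ℝⁿ → ℝⁿ be C^k (k ≥ 2) near (0,0) with F(0,0) = 0, ‖F‖_{C^k} ≤ K, and ∂F/∂y(0,0) invertible. Set δ = 1/(2(1 + (1+K)² ‖(∂F/∂y(0,0))⁻¹‖²)^{1/2}) and r = δ/K. Then there exists a C^k map g : B(0, rδ/(2(K+1))) ⊆ ℝᵐ → ℝⁿ with g(0) = 0, F(x, g(x)) = 0 for all x in that ball, and ‖Dg(x)‖ ≤ K/δ for all such x. -/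
open Metric Set ContinuousLinearMap

private lemma my_norm_fderiv_le {E F : Type*} [NormedAddCommGroup E] [NormedSpace ℝ E]
    [NormedAddCommGroup F] [NormedSpace ℝ F] (f : E → F) (x : E) :
    ‖fderiv ℝ f x‖ ≤ ‖iteratedFDeriv ℝ 1 f x‖ := by
  refine ContinuousLinearMap.opNorm_le_bound _ (norm_nonneg _) fun u => ?_
  have h : fderiv ℝ f x u = iteratedFDeriv ℝ 1 f x (fun _ : Fin 1 => u) := by
    rw [iteratedFDeriv_one_apply]
  rw [h]
  calc ‖iteratedFDeriv ℝ 1 f x (fun _ : Fin 1 => u)‖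
      ≤ ‖iteratedFDeriv ℝ 1 f x‖ * ∏ _i : Fin 1, ‖u‖ :=
        (iteratedFDeriv ℝ 1 f x).le_opNorm _
    _ = ‖iteratedFDeriv ℝ 1 f x‖ * ‖u‖ := by simp

private lemma my_norm_inv_le {Y : Type*} [NormedAddCommGroup Y] [NormedSpace ℝ Y]
    [CompleteSpace Y] (t : Y →L[ℝ] Y) (h : ‖t‖ < 1) :
    ‖(((Units.oneSub t h)⁻¹ : (Y →L[ℝ] Y)ˣ) : Y →L[ℝ] Y)‖ ≤ 1 / (1 - ‖t‖) := by
  set u := Units.oneSub t h with hu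
  set v : Y →L[ℝ] Y := ((u⁻¹ : (Y →L[ℝ] Y)ˣ) : Y →L[ℝ] Y) with hv
  have h1 : (1 - t) * v = 1 := by
    have := u.mul_inv
    rwa [hu, Units.val_oneSub] at this
  have h2 : v = 1 + t * v := by
    have : v - t * v = 1 := by rw [← h1, sub_mul, one_mul]
    exact sub_eq_iff_eq_add.mp this
  have h3 : ‖v‖ ≤ 1 + ‖t‖ * ‖v‖ := by
    calc ‖v‖ = ‖1 + t * v‖ := by rw [← h2]
    _ ≤ ‖(1 : Y →L[ℝ] Y)‖ + ‖t * v‖ := norm_add_le _ _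
    _ ≤ 1 + ‖t‖ * ‖v‖ := by
        gcongr
        · exact ContinuousLinearMap.norm_id_le
        · exact norm_mul_le _ _
  rw [le_div_iff₀ (by linarith)]
  nlinarith [norm_nonneg v]

private def triangularEquiv {E Y : Type*} [NormedAddCommGroup E] [NormedSpace ℝ E]
    [NormedAddCommGroup Y] [NormedSpace ℝ Y]
    (T : E × Y →L[ℝ] Y) (My : Y ≃L[ℝ] Y) (hMy : ∀ v, My v = T (0, v)) :
    (E × Y) ≃L[ℝ] (E × Y) :=
  ContinuousLinearEquiv.equivOfInverse ((ContinuousLinearMap.fst ℝ E Y).prod T)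
    ((ContinuousLinearMap.fst ℝ E Y).prod
      ((My.symm : Y →L[ℝ] Y).comp ((ContinuousLinearMap.snd ℝ E Y) -
        T.comp ((ContinuousLinearMap.fst ℝ E Y).prod 0))))
    (fun p => by
      ext
      · rfl
      · show My.symm ((T p) - T (p.1, 0)) = p.2
        have : T p - T (p.1, 0) = T (0, p.2) := by
          rw [← map_sub]; congr 1; ext <;> simp
        rw [this, ← hMy, My.symm_apply_apply])
    (fun q => by
      ext
      · rfl
      · show T (q.1, My.symm (q.2 - T (q.1, 0))) = q.2
        have : ((q.1, My.symm (q.2 - T (q.1, 0))) : E × Y)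
            = (q.1, 0) + (0, My.symm (q.2 - T (q.1, 0))) := by ext <;> simp
        rw [this, map_add, ← hMy, My.apply_symm_apply]
        abel)

private lemma triangularEquiv_coe {E Y : Type*} [NormedAddCommGroup E] [NormedSpace ℝ E]
    [NormedAddCommGroup Y] [NormedSpace ℝ Y]
    (T : E × Y →L[ℝ] Y) (My : Y ≃L[ℝ] Y) (hMy : ∀ v, My v = T (0, v)) :
    (triangularEquiv T My hMy : (E × Y) →L[ℝ] (E × Y))
      = (ContinuousLinearMap.fst ℝ E Y).prod T := rfl

private lemma triangularEquiv_symm_apply {E Y : Type*} [NormedAddCommGroup E] [NormedSpace ℝ E]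
    [NormedAddCommGroup Y] [NormedSpace ℝ Y]
    (T : E × Y →L[ℝ] Y) (My : Y ≃L[ℝ] Y) (hMy : ∀ v, My v = T (0, v)) (q : E × Y) :
    (triangularEquiv T My hMy).symm q = (q.1, My.symm (q.2 - T (q.1, 0))) := rfl

set_option maxHeartbeats 1600000 in
/-- Quantitative implicit function theorem: if `F : ℝᵐ × ℝⁿ → ℝⁿ` is `C^k` (`k ≥ 2`)
with `C^k` norm ≤ `K`, `F(0,0) = 0`, and `∂F/∂y(0,0)` invertible with inverse `B`,
then with `δ = 1/(2(1+(1+K)²‖B‖²)^{1/2})` and `r = δ/K` there is a `C^k` map `g` on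
`B(0, rδ/(2(K+1)))` with `g 0 = 0`, `F(x, g x) = 0` and `‖Dg(x)‖ ≤ K/δ`. -/
theorem quantitative_implicit_function_theorem (m n k : ℕ) (hk : 2 ≤ k) (K : ℝ) (hK : 0 < K)
    (F : EuclideanSpace ℝ (Fin m) × EuclideanSpace ℝ (Fin n) → EuclideanSpace ℝ (Fin n))
    (hF : ContDiff ℝ k F) (hF0 : F (0, 0) = 0)
    (hFK : ∀ p, 1 ≤ p → p ≤ k → ∀ z, ‖iteratedFDeriv ℝ p F z‖ ≤ K)
    (B : EuclideanSpace ℝ (Fin n) →L[ℝ] EuclideanSpace ℝ (Fin n))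
    (hB₁ : B.comp (fderiv ℝ (fun y => F (0, y)) 0) = ContinuousLinearMap.id ℝ _)
    (hB₂ : (fderiv ℝ (fun y => F (0, y)) 0).comp B = ContinuousLinearMap.id ℝ _) :
    ∀ δ r ρ : ℝ,
      δ = 1 / (2 * Real.sqrt (1 + (1 + K) ^ 2 * ‖B‖ ^ 2)) →
      r = δ / K → ρ = r * δ / (2 * (K + 1)) →
    ∃ g : EuclideanSpace ℝ (Fin m) → EuclideanSpace ℝ (Fin n),
      ContDiffOn ℝ k g (ball 0 ρ) ∧ g 0 = 0 ∧
      (∀ x ∈ ball (0 : EuclideanSpace ℝ (Fin m)) ρ, F (x, g x) = 0) ∧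
      ∀ x ∈ ball (0 : EuclideanSpace ℝ (Fin m)) ρ,
        ‖fderivWithin ℝ g (ball 0 ρ) x‖ ≤ K / δ := by
  intro δ r ρ hδ hr hρ
  -- basic numerology
  set S : ℝ := Real.sqrt (1 + (1 + K) ^ 2 * ‖B‖ ^ 2) with hSdef
  have hS1 : 1 ≤ S := by
    have h1 : Real.sqrt 1 ≤ S :=
      Real.sqrt_le_sqrt (le_add_of_nonneg_right (by positivity))
    simpa using h1
  have hS0 : 0 < S := lt_of_lt_of_le one_pos hS1
  have hδ0 : 0 < δ := by rw [hδ]; positivity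
  have hr0 : 0 < r := by rw [hr]; positivity
  have hρ0 : 0 < ρ := by rw [hρ]; positivity
  have hKr : K * r = δ := by rw [hr, mul_comm, div_mul_cancel₀ δ hK.ne']
  have hBS : ‖B‖ * (1 + K) ≤ S := by
    have h1 : (‖B‖ * (1 + K)) ^ 2 ≤ 1 + (1 + K) ^ 2 * ‖B‖ ^ 2 := by nlinarith
    calc ‖B‖ * (1 + K) = Real.sqrt ((‖B‖ * (1 + K)) ^ 2) :=
          (Real.sqrt_sq (by positivity)).symm
      _ ≤ S := Real.sqrt_le_sqrt h1
  have hSδ : 2 * δ * S = 1 := by rw [hδ]; field_simp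
  have hBδ : ‖B‖ * δ ≤ 1 / (2 * (1 + K)) := by
    rw [le_div_iff₀ (by positivity)]
    have h1 : ‖B‖ * δ * (2 * (1 + K)) * S = ‖B‖ * (1 + K) := by
      linear_combination (‖B‖ * (1 + K)) * hSδ
    have h2 : ‖B‖ * δ * (2 * (1 + K)) * S ≤ 1 * S := by rw [h1]; linarith
    exact le_of_mul_le_mul_right (by linarith) hS0
  have hBδhalf : ‖B‖ * δ ≤ 1 / 2 :=
    hBδ.trans (one_div_le_one_div_of_le (by norm_num) (by linarith))
  have h1k : (1 : WithTop ℕ∞) ≤ (k : WithTop ℕ∞) := by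
    exact_mod_cast Nat.one_le_of_lt hk
  have hk0 : (k : WithTop ℕ∞) ≠ 0 := by exact_mod_cast (show k ≠ 0 by omega)
  -- first derivative bound
  have hDF1 : ∀ z, ‖fderiv ℝ F z‖ ≤ K := fun z =>
    le_trans (my_norm_fderiv_le F z) (hFK 1 le_rfl (by omega) z)
  -- Lipschitz bound on the derivative
  have hLip : ∀ z w, ‖fderiv ℝ F z - fderiv ℝ F w‖ ≤ K * ‖z - w‖ := by
    intro z w
    have hd : ∀ x ∈ (univ : Set (EuclideanSpace ℝ (Fin m) × EuclideanSpace ℝ (Fin n))),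
        DifferentiableAt ℝ (fderiv ℝ F) x := by
      intro x _
      have h2 : ContDiff ℝ 1 (fderiv ℝ F) :=
        hF.fderiv_right (m := 1) (by exact_mod_cast hk)
      exact (h2.differentiable one_ne_zero).differentiableAt
    have hbd : ∀ x ∈ (univ : Set (EuclideanSpace ℝ (Fin m) × EuclideanSpace ℝ (Fin n))),
        ‖fderiv ℝ (fderiv ℝ F) x‖ ≤ K := by
      intro x _
      refine (my_norm_fderiv_le (fderiv ℝ F) x).trans ?_
      rw [norm_iteratedFDeriv_fderiv]
      exact hFK 2 (by omega) hk x
    simpa using convex_univ.norm_image_sub_le_of_norm_fderiv_le hd hbd (mem_univ w) (mem_univ z)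
  -- the partial derivative in `y` at the origin
  set Dy : EuclideanSpace ℝ (Fin n) →L[ℝ] EuclideanSpace ℝ (Fin n) :=
    (fderiv ℝ F (0, 0)).comp (ContinuousLinearMap.inr ℝ _ _) with hDydef
  have hDy : fderiv ℝ (fun y => F (0, y)) 0 = Dy := by
    have h1 : HasFDerivAt (fun y : EuclideanSpace ℝ (Fin n) => F (0, y)) Dy 0 := by
      have h2 : HasFDerivAt F (fderiv ℝ F (0, 0)) (0, 0) :=
        ((hF.differentiable hk0) (0, 0)).hasFDerivAt
      have h3 := h2.comp (0 : EuclideanSpace ℝ (Fin n))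
        (ContinuousLinearMap.inr ℝ (EuclideanSpace ℝ (Fin m))
          (EuclideanSpace ℝ (Fin n))).hasFDerivAt
      simpa [Function.comp_def] using h3
    exact h1.fderiv
  have hB₁' : ∀ v, B (Dy v) = v := by
    intro v
    have := congrArg (fun T => T v) (hDy ▸ hB₁)
    simpa using this
  have hB₂' : ∀ v, Dy (B v) = v := by
    intro v
    have := congrArg (fun T => T v) (hDy ▸ hB₂)
    simpa using this
  set Dy_eq : EuclideanSpace ℝ (Fin n) ≃L[ℝ] EuclideanSpace ℝ (Fin n) :=
    ContinuousLinearEquiv.equivOfInverse Dy B hB₁' hB₂' with hDyeq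
  have hMy0 : ∀ v, Dy_eq v = fderiv ℝ F (0, 0) (0, v) := fun v => rfl
  have hDy_symm : ∀ w, Dy_eq.symm w = B w := fun w => rfl
  -- key: invertibility of the `y`-derivative at every point of `ball 0 r`
  have hkey : ∀ z : EuclideanSpace ℝ (Fin m) × EuclideanSpace ℝ (Fin n), ‖z‖ ≤ r →
      ∃ Mz : EuclideanSpace ℝ (Fin n) ≃L[ℝ] EuclideanSpace ℝ (Fin n),
        (∀ v, Mz v = fderiv ℝ F z (0, v)) ∧
        (∀ w, ‖Mz.symm w‖ ≤ 2 * ‖B‖ * ‖w‖) := by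
    intro z hz
    set M : EuclideanSpace ℝ (Fin n) →L[ℝ] EuclideanSpace ℝ (Fin n) :=
      (fderiv ℝ F z).comp (ContinuousLinearMap.inr ℝ _ _) with hMdef
    have hΔ : ‖M - Dy‖ ≤ δ := by
      refine ContinuousLinearMap.opNorm_le_bound _ hδ0.le fun v => ?_
      have h1 : (M - Dy) v = (fderiv ℝ F z - fderiv ℝ F (0, 0)) (0, v) := by
        simp [hMdef, hDydef]
      rw [h1]
      calc ‖(fderiv ℝ F z - fderiv ℝ F (0, 0)) (0, v)‖
          ≤ ‖fderiv ℝ F z - fderiv ℝ F (0, 0)‖ * ‖((0, v) : _)‖ :=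
            ContinuousLinearMap.le_opNorm _ _
        _ ≤ (K * ‖z‖) * ‖v‖ := by
            have h2 : ‖((0, v) : EuclideanSpace ℝ (Fin m) × EuclideanSpace ℝ (Fin n))‖ = ‖v‖ := by
              simp [Prod.norm_def]
            rw [h2]
            refine mul_le_mul_of_nonneg_right ?_ (norm_nonneg v)
            have h3 := hLip z (0, 0)
            simpa [Prod.mk_zero_zero] using h3
        _ ≤ δ * ‖v‖ := by
            have : K * ‖z‖ ≤ δ := by
              calc K * ‖z‖ ≤ K * r := by gcongr
                _ = δ := hKr
            gcongr
    have ht : ‖-(B.comp (M - Dy))‖ < 1 := by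
      rw [norm_neg]
      calc ‖B.comp (M - Dy)‖ ≤ ‖B‖ * ‖M - Dy‖ := ContinuousLinearMap.opNorm_comp_le _ _
        _ ≤ ‖B‖ * δ := by gcongr
        _ ≤ 1 / 2 := hBδhalf
        _ < 1 := by norm_num
    set u : (EuclideanSpace ℝ (Fin n) →L[ℝ] EuclideanSpace ℝ (Fin n))ˣ :=
      Units.oneSub _ ht with hu
    have huval : (u : EuclideanSpace ℝ (Fin n) →L[ℝ] EuclideanSpace ℝ (Fin n))
        = 1 + B.comp (M - Dy) := by
      rw [hu, Units.val_oneSub, sub_neg_eq_add]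
    set Mz : EuclideanSpace ℝ (Fin n) ≃L[ℝ] EuclideanSpace ℝ (Fin n) :=
      (ContinuousLinearEquiv.unitsEquiv ℝ _ u).trans Dy_eq with hMz
    have hMzv : ∀ v, Mz v = M v := by
      intro v
      have h1 : Mz v = Dy ((u : _ →L[ℝ] _) v) := rfl
      rw [h1, huval]
      have h2 : ((1 + B.comp (M - Dy)) : _ →L[ℝ] _) v = v + B ((M - Dy) v) := by
        simp
      rw [h2, map_add, hB₂']
      simp
    refine ⟨Mz, fun v => ?_, fun w => ?_⟩
    · rw [hMzv v]; simp [hMdef]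
    · set uinv : EuclideanSpace ℝ (Fin n) →L[ℝ] EuclideanSpace ℝ (Fin n) :=
        ((u⁻¹ : _ˣ) : EuclideanSpace ℝ (Fin n) →L[ℝ] EuclideanSpace ℝ (Fin n)) with huinv
      set w' : EuclideanSpace ℝ (Fin n) := uinv (B w) with hw'
      have h4 : (u : EuclideanSpace ℝ (Fin n) →L[ℝ] EuclideanSpace ℝ (Fin n)) w' = B w := by
        have h5 : (u : EuclideanSpace ℝ (Fin n) →L[ℝ] EuclideanSpace ℝ (Fin n)) * uinv = 1 :=
          u.mul_inv
        have h6 := congrArg (fun T => T (B w)) h5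
        simpa [hw', ContinuousLinearMap.mul_apply] using h6
      have h2 : Mz w' = w := by
        have h3 : Mz w' = Dy ((u : EuclideanSpace ℝ (Fin n) →L[ℝ] EuclideanSpace ℝ (Fin n)) w') :=
          rfl
        rw [h3, h4, hB₂']
      have h1 : Mz.symm w = w' := by rw [← h2, ContinuousLinearEquiv.symm_apply_apply]
      rw [h1, hw']
      have h6 : ‖uinv‖ ≤ 1 / (1 - ‖-(B.comp (M - Dy))‖) := my_norm_inv_le _ ht
      have h7 : ‖-(B.comp (M - Dy))‖ ≤ 1 / 2 := by
        rw [norm_neg]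
        calc ‖B.comp (M - Dy)‖ ≤ ‖B‖ * ‖M - Dy‖ := ContinuousLinearMap.opNorm_comp_le _ _
          _ ≤ ‖B‖ * δ := by gcongr
          _ ≤ 1 / 2 := hBδhalf
      have h8 : ‖uinv‖ ≤ 2 := by
        refine h6.trans ?_
        rw [div_le_iff₀ (by linarith [norm_nonneg (-(B.comp (M - Dy)))])]
        linarith [norm_nonneg (-(B.comp (M - Dy)))]
      calc ‖uinv (B w)‖ ≤ ‖uinv‖ * ‖B w‖ := ContinuousLinearMap.le_opNorm _ _
        _ ≤ 2 * (‖B‖ * ‖w‖) := by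
            have h9 : ‖B w‖ ≤ ‖B‖ * ‖w‖ := B.le_opNorm w
            have h10 : 0 ≤ ‖B w‖ := norm_nonneg _
            nlinarith [norm_nonneg uinv]
        _ = 2 * ‖B‖ * ‖w‖ := by ring
  -- the global diffeomorphism candidate
  set Φ : EuclideanSpace ℝ (Fin m) × EuclideanSpace ℝ (Fin n) →
      EuclideanSpace ℝ (Fin m) × EuclideanSpace ℝ (Fin n) :=
    fun p => (p.1, F p) with hΦdef
  have hΦd : ∀ p, HasFDerivAt Φ
      ((ContinuousLinearMap.fst ℝ _ _).prod (fderiv ℝ F p)) p := fun p =>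
    (hasFDerivAt_fst).prodMk ((hF.differentiable hk0) p).hasFDerivAt
  have hΦ0 : Φ 0 = 0 := by
    have : ((0, 0) : EuclideanSpace ℝ (Fin m) × EuclideanSpace ℝ (Fin n)) = 0 :=
      Prod.mk_zero_zero
    simp only [hΦdef]
    rw [← this, hF0]
  set A' : (EuclideanSpace ℝ (Fin m) × EuclideanSpace ℝ (Fin n)) ≃L[ℝ]
      (EuclideanSpace ℝ (Fin m) × EuclideanSpace ℝ (Fin n)) :=
    triangularEquiv (fderiv ℝ F (0, 0)) Dy_eq hMy0 with hA'
  -- bound on the inverse of the linearization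
  have hAsymm : ‖(A'.symm : (EuclideanSpace ℝ (Fin m) × EuclideanSpace ℝ (Fin n)) →L[ℝ]
      (EuclideanSpace ℝ (Fin m) × EuclideanSpace ℝ (Fin n)))‖ ≤ S := by
    refine ContinuousLinearMap.opNorm_le_bound _ (by linarith) fun p => ?_
    have h1 : A'.symm p = (p.1, Dy_eq.symm (p.2 - fderiv ℝ F (0, 0) (p.1, 0))) :=
      triangularEquiv_symm_apply _ _ _ p
    rw [ContinuousLinearEquiv.coe_coe, h1, Prod.norm_def]
    refine max_le ?_ ?_
    · calc ‖p.1‖ ≤ ‖p‖ := norm_fst_le p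
        _ ≤ S * ‖p‖ := le_mul_of_one_le_left (norm_nonneg p) hS1
    · rw [hDy_symm]
      have h2 : ‖fderiv ℝ F (0, 0) (p.1, 0)‖ ≤ K * ‖p.1‖ := by
        calc ‖fderiv ℝ F (0, 0) (p.1, 0)‖
            ≤ ‖fderiv ℝ F (0, 0)‖ * ‖((p.1, 0) : _)‖ := ContinuousLinearMap.le_opNorm _ _
          _ ≤ K * ‖p.1‖ := by
              have h3 : ‖((p.1, 0) : EuclideanSpace ℝ (Fin m) × EuclideanSpace ℝ (Fin n))‖
                  = ‖p.1‖ := by simp [Prod.norm_def]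
              rw [h3]
              exact mul_le_mul_of_nonneg_right (hDF1 (0, 0)) (norm_nonneg _)
      calc ‖B (p.2 - fderiv ℝ F (0, 0) (p.1, 0))‖
          ≤ ‖B‖ * ‖p.2 - fderiv ℝ F (0, 0) (p.1, 0)‖ := B.le_opNorm _
        _ ≤ ‖B‖ * (‖p.2‖ + K * ‖p.1‖) := by
            refine mul_le_mul_of_nonneg_left ?_ (norm_nonneg B)
            exact (norm_sub_le _ _).trans (by linarith)
        _ ≤ ‖B‖ * ((1 + K) * ‖p‖) := by
            refine mul_le_mul_of_nonneg_left ?_ (norm_nonneg B)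
            have h4 : ‖p.1‖ ≤ ‖p‖ := norm_fst_le p
            have h5 : ‖p.2‖ ≤ ‖p‖ := norm_snd_le p
            nlinarith [norm_nonneg p]
        _ ≤ S * ‖p‖ := by
            rw [← mul_assoc]
            exact mul_le_mul_of_nonneg_right hBS (norm_nonneg p)
  -- the approximation property on `ball 0 r`
  set cδ : NNReal := ⟨δ, hδ0.le⟩ with hcδ
  have happrox : ApproximatesLinearOn Φ (A' : _ →L[ℝ] _) (ball 0 r) cδ := by
    intro p hp q hq
    have hbound : ∀ z ∈ ball (0 : EuclideanSpace ℝ (Fin m) × EuclideanSpace ℝ (Fin n)) r,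
        ‖(ContinuousLinearMap.fst ℝ _ _).prod (fderiv ℝ F z) - (A' : _ →L[ℝ] _)‖ ≤ δ := by
      intro z hz
      rw [hA', triangularEquiv_coe]
      refine ContinuousLinearMap.opNorm_le_bound _ hδ0.le fun q' => ?_
      have h1 : ((ContinuousLinearMap.fst ℝ _ _).prod (fderiv ℝ F z) -
          (ContinuousLinearMap.fst ℝ _ _).prod (fderiv ℝ F (0, 0))) q'
          = (0, (fderiv ℝ F z - fderiv ℝ F (0, 0)) q') := by
        simp [Prod.ext_iff]
      rw [h1]
      have h2 : ‖((0 : EuclideanSpace ℝ (Fin m)), (fderiv ℝ F z - fderiv ℝ F (0, 0)) q')‖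
          = ‖(fderiv ℝ F z - fderiv ℝ F (0, 0)) q'‖ := by simp [Prod.norm_def]
      rw [h2]
      calc ‖(fderiv ℝ F z - fderiv ℝ F (0, 0)) q'‖
          ≤ ‖fderiv ℝ F z - fderiv ℝ F (0, 0)‖ * ‖q'‖ := ContinuousLinearMap.le_opNorm _ _
        _ ≤ δ * ‖q'‖ := by
            refine mul_le_mul_of_nonneg_right ?_ (norm_nonneg q')
            have h3 := hLip z (0, 0)
            have h4 : ‖z - ((0, 0) : _)‖ = ‖z‖ := by rw [Prod.mk_zero_zero, sub_zero]
            rw [h4] at h3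
            refine h3.trans ?_
            calc K * ‖z‖ ≤ K * r := by
                  refine mul_le_mul_of_nonneg_left ?_ hK.le
                  exact le_of_lt (mem_ball_zero_iff.mp hz)
              _ = δ := hKr
    have := (convex_ball (0 : EuclideanSpace ℝ (Fin m) × EuclideanSpace ℝ (Fin n))
      r).norm_image_sub_le_of_norm_hasFDerivWithin_le'
      (fun z hz => (hΦd z).hasFDerivWithinAt) hbound hq hp
    exact this
  -- strict bound needed for invertibility machinery
  have hc : Subsingleton (EuclideanSpace ℝ (Fin m) × EuclideanSpace ℝ (Fin n)) ∨
      cδ < (‖(A'.symm : (EuclideanSpace ℝ (Fin m) × EuclideanSpace ℝ (Fin n)) →L[ℝ]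
        (EuclideanSpace ℝ (Fin m) × EuclideanSpace ℝ (Fin n)))‖₊)⁻¹ := by
    rcases subsingleton_or_nontrivial
      (EuclideanSpace ℝ (Fin m) × EuclideanSpace ℝ (Fin n)) with h | h
    · exact Or.inl h
    · right
      set NR : ℝ := ‖(A'.symm : (EuclideanSpace ℝ (Fin m) × EuclideanSpace ℝ (Fin n)) →L[ℝ]
        (EuclideanSpace ℝ (Fin m) × EuclideanSpace ℝ (Fin n)))‖ with hNR
      have hNpos : 0 < NR := by
        obtain ⟨p, hp⟩ := exists_ne (0 : EuclideanSpace ℝ (Fin m) × EuclideanSpace ℝ (Fin n))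
        have h1 : ‖p‖ ≤ NR * ‖A' p‖ := by
          have h2 := (A'.symm : (EuclideanSpace ℝ (Fin m) × EuclideanSpace ℝ (Fin n)) →L[ℝ]
            (EuclideanSpace ℝ (Fin m) × EuclideanSpace ℝ (Fin n))).le_opNorm (A' p)
          simpa using h2
        by_contra hcon
        push_neg at hcon
        have h3 : NR = 0 := le_antisymm hcon (norm_nonneg _)
        rw [h3, zero_mul] at h1
        exact hp (norm_le_zero_iff.mp h1)
      have h2δ : 2 * δ = 1 / S := (eq_div_iff hS0.ne').mpr hSδ
      have hNinv : 2 * δ ≤ NR⁻¹ := by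
        rw [h2δ, one_div]
        exact inv_anti₀ hNpos hAsymm
      rw [← NNReal.coe_lt_coe, NNReal.coe_inv, coe_nnnorm]
      show (δ : ℝ) < NR⁻¹
      linarith
  set e := happrox.toOpenPartialHomeomorph Φ (ball 0 r) hc isOpen_ball with he
  have hesrc : e.source = ball 0 r := rfl
  have hecoe : ∀ p, e p = Φ p := fun _ => rfl
  -- radius for surjectivity
  set ε : ℝ := r / (2 * (K + 1)) with hε
  have hε0 : 0 ≤ ε := by rw [hε]; positivity
  have hεr : ε < r := by
    rw [hε, div_lt_iff₀ (by positivity)]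
    nlinarith
  have hsub : closedBall (0 : EuclideanSpace ℝ (Fin m) × EuclideanSpace ℝ (Fin n)) ε
      ⊆ ball 0 r := closedBall_subset_ball hεr
  have htar := happrox.closedBall_subset_target hc isOpen_ball hε0 hsub
  have hρδε : ρ = δ * ε := by rw [hρ, hε]; ring
  -- points of the small ball are in the target
  have hmem : ∀ x : EuclideanSpace ℝ (Fin m), ‖x‖ < ρ →
      ((x, 0) : EuclideanSpace ℝ (Fin m) × EuclideanSpace ℝ (Fin n)) ∈ e.target := by
    intro x hx
    rcases subsingleton_or_nontrivial
      (EuclideanSpace ℝ (Fin m) × EuclideanSpace ℝ (Fin n)) with h | h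
    · have h1 : ((x, 0) : EuclideanSpace ℝ (Fin m) × EuclideanSpace ℝ (Fin n)) = Φ 0 :=
        Subsingleton.elim _ _
      rw [h1]
      exact e.map_source (by rw [hesrc]; exact mem_ball_self hr0)
    · refine htar ?_
      rw [mem_closedBall, hΦ0, dist_zero_right]
      have hxnorm : ‖((x, 0) : EuclideanSpace ℝ (Fin m) × EuclideanSpace ℝ (Fin n))‖ = ‖x‖ := by
        simp [Prod.norm_def]
      rw [hxnorm]
      set NR : ℝ := ‖(A'.symm : (EuclideanSpace ℝ (Fin m) × EuclideanSpace ℝ (Fin n)) →L[ℝ]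
        (EuclideanSpace ℝ (Fin m) × EuclideanSpace ℝ (Fin n)))‖ with hNR
      have hNpos : 0 < NR := by
        obtain ⟨p, hp⟩ := exists_ne (0 : EuclideanSpace ℝ (Fin m) × EuclideanSpace ℝ (Fin n))
        have h1 : ‖p‖ ≤ NR * ‖A' p‖ := by
          have h2 := (A'.symm : (EuclideanSpace ℝ (Fin m) × EuclideanSpace ℝ (Fin n)) →L[ℝ]
            (EuclideanSpace ℝ (Fin m) × EuclideanSpace ℝ (Fin n))).le_opNorm (A' p)
          simpa using h2
        by_contra hcon
        push_neg at hcon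
        have h3 : NR = 0 := le_antisymm hcon (norm_nonneg _)
        rw [h3, zero_mul] at h1
        exact hp (norm_le_zero_iff.mp h1)
      have h2δ : 2 * δ = 1 / S := (eq_div_iff hS0.ne').mpr hSδ
      have hNinv : 2 * δ ≤ NR⁻¹ := by
        rw [h2δ, one_div]
        exact inv_anti₀ hNpos hAsymm
      have hcoe : (cδ : ℝ) = δ := rfl
      rw [NNReal.coe_inv, coe_nnnorm]
      show ‖x‖ ≤ (NR⁻¹ - (cδ : ℝ)) * ε
      rw [hcoe]
      have h4 : δ * ε ≤ (NR⁻¹ - δ) * ε := by nlinarith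
      rw [hρδε] at hx
      linarith
  -- the implicit function
  set g : EuclideanSpace ℝ (Fin m) → EuclideanSpace ℝ (Fin n) :=
    fun x => (e.symm (x, 0)).2 with hg
  have hzfact : ∀ x : EuclideanSpace ℝ (Fin m), ‖x‖ < ρ →
      e.symm (x, 0) = (x, g x) ∧
      ((x, g x) : EuclideanSpace ℝ (Fin m) × EuclideanSpace ℝ (Fin n)) ∈ ball 0 r ∧
      F (x, g x) = 0 := by
    intro x hx
    have ht := hmem x hx
    have hzs : e.symm (x, 0) ∈ ball (0 : EuclideanSpace ℝ (Fin m) ×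
        EuclideanSpace ℝ (Fin n)) r := by
      rw [← hesrc]; exact e.map_target ht
    have hΦz : Φ (e.symm (x, 0)) = (x, 0) := by
      have h1 := e.right_inv ht
      rwa [hecoe] at h1
    have hz1 : (e.symm (x, 0)).1 = x := by
      have h2 := congrArg Prod.fst hΦz
      exact h2
    have hzeq : e.symm (x, 0) = (x, g x) := by
      have h3 : e.symm (x, 0) = ((e.symm (x, 0)).1, (e.symm (x, 0)).2) := rfl
      rw [h3, hz1]
    have hFz : F (x, g x) = 0 := by
      have h4 : (Φ (e.symm (x, 0))).2 = 0 := by rw [hΦz]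
      rw [hzeq] at h4
      exact h4
    exact ⟨hzeq, hzeq ▸ hzs, hFz⟩
  have hg0 : g 0 = 0 := by
    have h00 : (0 : EuclideanSpace ℝ (Fin m) × EuclideanSpace ℝ (Fin n)) ∈ e.source := by
      rw [hesrc]; exact mem_ball_self hr0
    have h1 : e.symm (Φ 0) = 0 := by
      have h2 := e.left_inv h00
      rwa [hecoe] at h2
    rw [hΦ0] at h1
    show (e.symm ((0 : EuclideanSpace ℝ (Fin m)), (0 : EuclideanSpace ℝ (Fin n)))).2 = 0
    rw [Prod.mk_zero_zero, h1]
    rfl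
  -- smoothness of g
  have hgk : ∀ x ∈ ball (0 : EuclideanSpace ℝ (Fin m)) ρ, ContDiffAt ℝ k g x := by
    intro x hx
    rw [mem_ball_zero_iff] at hx
    obtain ⟨hzeq, hzball, hFz⟩ := hzfact x hx
    obtain ⟨Mz, hMz, hMzsymm⟩ := hkey (x, g x) (le_of_lt (mem_ball_zero_iff.mp hzball))
    have hfd : HasFDerivAt Φ
        ((triangularEquiv (fderiv ℝ F (x, g x)) Mz hMz : _ →L[ℝ] _)) (x, g x) := by
      rw [triangularEquiv_coe]; exact hΦd (x, g x)
    have hΦck : ContDiffAt ℝ k Φ (x, g x) := (contDiff_fst.prodMk hF).contDiffAt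
    set ψ := hΦck.localInverse hfd hk0 with hψ
    have hψk : ContDiffAt ℝ k ψ (Φ (x, g x)) := hΦck.to_localInverse hfd hk0
    have hΦzval : Φ (x, g x) = (x, 0) := by
      rw [← hzeq]
      have h1 := e.right_inv (hmem x hx)
      rwa [hecoe] at h1
    rw [hΦzval] at hψk
    have hleft : ∀ᶠ p in nhds ((x, g x) : EuclideanSpace ℝ (Fin m) ×
        EuclideanSpace ℝ (Fin n)), e.symm (Φ p) = p := by
      filter_upwards [isOpen_ball.mem_nhds hzball] with p hp
      have h2 := e.left_inv (by rw [hesrc]; exact hp)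
      rwa [hecoe] at h2
    have huniq := (hΦck.hasStrictFDerivAt' hfd hk0).localInverse_unique hleft
    rw [hΦzval] at huniq
    have htendsto : Filter.Tendsto
        (fun x' : EuclideanSpace ℝ (Fin m) => ((x', 0) : EuclideanSpace ℝ (Fin m) ×
          EuclideanSpace ℝ (Fin n))) (nhds x) (nhds (x, 0)) :=
      (continuous_id.prodMk continuous_const).tendsto x
    have heq : (fun x' => (ψ (x', 0)).2) =ᶠ[nhds x] g := by
      filter_upwards [htendsto.eventually huniq] with x' hx'
      show (ψ (x', 0)).2 = (e.symm (x', 0)).2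
      rw [hx']
      rfl
    have h1 : ContDiffAt ℝ k (fun x' : EuclideanSpace ℝ (Fin m) =>
        ((x', 0) : EuclideanSpace ℝ (Fin m) × EuclideanSpace ℝ (Fin n))) x :=
      (contDiff_id.prodMk contDiff_const).contDiffAt
    have h2 : ContDiffAt ℝ k (fun x' : EuclideanSpace ℝ (Fin m) => ψ (x', 0)) x :=
      hψk.comp x h1
    have hcomp : ContDiffAt ℝ k (fun x' : EuclideanSpace ℝ (Fin m) => (ψ (x', 0)).2) x :=
      contDiff_snd.contDiffAt.comp x h2
    exact hcomp.congr_of_eventuallyEq heq.symm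
  -- derivative bound
  have hdg : ∀ x ∈ ball (0 : EuclideanSpace ℝ (Fin m)) ρ,
      ‖fderivWithin ℝ g (ball 0 ρ) x‖ ≤ K / δ := by
    intro x hx
    have hx' := mem_ball_zero_iff.mp hx
    obtain ⟨hzeq, hzball, hFz⟩ := hzfact x hx'
    obtain ⟨Mz, hMz, hMzsymm⟩ := hkey (x, g x) (le_of_lt (mem_ball_zero_iff.mp hzball))
    have hgd : DifferentiableAt ℝ g x := (hgk x hx).differentiableAt hk0
    rw [fderivWithin_of_isOpen isOpen_ball hx]
    have hzero : fderiv ℝ (fun x' => F (x', g x')) x = 0 := by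
      have hev : (fun x' => F (x', g x')) =ᶠ[nhds x]
          (fun _ => (0 : EuclideanSpace ℝ (Fin n))) := by
        filter_upwards [isOpen_ball.mem_nhds hx] with x' hx'2
        exact (hzfact x' (mem_ball_zero_iff.mp hx'2)).2.2
      rw [hev.fderiv_eq]
      exact fderiv_const_apply 0
    have hchain : HasFDerivAt (fun x' => F (x', g x'))
        ((fderiv ℝ F (x, g x)).comp
          ((ContinuousLinearMap.id ℝ (EuclideanSpace ℝ (Fin m))).prod (fderiv ℝ g x))) x := by
      have hFd : HasFDerivAt F (fderiv ℝ F (x, g x)) (x, g x) :=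
        ((hF.differentiable hk0) _).hasFDerivAt
      have hin : HasFDerivAt (fun x' : EuclideanSpace ℝ (Fin m) =>
          ((x', g x') : EuclideanSpace ℝ (Fin m) × EuclideanSpace ℝ (Fin n)))
          ((ContinuousLinearMap.id ℝ (EuclideanSpace ℝ (Fin m))).prod (fderiv ℝ g x)) x :=
        (hasFDerivAt_id x).prodMk hgd.hasFDerivAt
      exact hFd.comp x hin
    have hcompzero : (fderiv ℝ F (x, g x)).comp
        ((ContinuousLinearMap.id ℝ (EuclideanSpace ℝ (Fin m))).prod (fderiv ℝ g x)) = 0 := by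
      rw [← hchain.fderiv]
      exact hzero
    refine ContinuousLinearMap.opNorm_le_bound _ (by positivity) fun u => ?_
    have h5 : fderiv ℝ F (x, g x) (u, fderiv ℝ g x u) = 0 := by
      have h5' := congrArg (fun T => T u) hcompzero
      simpa using h5'
    have h6 : fderiv ℝ F (x, g x) (u, fderiv ℝ g x u)
        = fderiv ℝ F (x, g x) (u, 0) + Mz (fderiv ℝ g x u) := by
      rw [hMz, ← map_add]
      congr 1
      ext <;> simp
    have h7 : Mz (fderiv ℝ g x u) = -(fderiv ℝ F (x, g x) (u, 0)) := by
      rw [h6] at h5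
      exact eq_neg_of_add_eq_zero_left (by rw [add_comm]; exact h5)
    have h8 : fderiv ℝ g x u = Mz.symm (-(fderiv ℝ F (x, g x) (u, 0))) := by
      rw [← h7, ContinuousLinearEquiv.symm_apply_apply]
    rw [h8]
    calc ‖Mz.symm (-(fderiv ℝ F (x, g x) (u, 0)))‖
        ≤ 2 * ‖B‖ * ‖-(fderiv ℝ F (x, g x) (u, 0))‖ := hMzsymm _
      _ = 2 * ‖B‖ * ‖fderiv ℝ F (x, g x) (u, 0)‖ := by rw [norm_neg]
      _ ≤ 2 * ‖B‖ * (K * ‖u‖) := by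
          refine mul_le_mul_of_nonneg_left ?_ (by positivity)
          calc ‖fderiv ℝ F (x, g x) (u, 0)‖
              ≤ ‖fderiv ℝ F (x, g x)‖ * ‖((u, 0) : EuclideanSpace ℝ (Fin m) ×
                EuclideanSpace ℝ (Fin n))‖ := ContinuousLinearMap.le_opNorm _ _
            _ ≤ K * ‖u‖ := by
                have h9 : ‖((u, 0) : EuclideanSpace ℝ (Fin m) ×
                    EuclideanSpace ℝ (Fin n))‖ = ‖u‖ := by simp [Prod.norm_def]
                rw [h9]
                exact mul_le_mul_of_nonneg_right (hDF1 _) (norm_nonneg u)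
      _ ≤ K / δ * ‖u‖ := by
          rw [div_mul_eq_mul_div, le_div_iff₀ hδ0]
          have h10 : ‖B‖ * δ * (K * ‖u‖) ≤ 1 / 2 * (K * ‖u‖) :=
            mul_le_mul_of_nonneg_right hBδhalf (mul_nonneg hK.le (norm_nonneg u))
          nlinarith [h10]
  exact ⟨g, fun x hx => (hgk x hx).contDiffWithinAt, hg0,
    fun x hx => (hzfact x (mem_ball_zero_iff.mp hx)).2.2, hdg⟩
end

section
/- The linear map Φ : Δ(n) → Sym(n) defined by Φ(H) = −(Hᵀ D₀ + D₀ H), where D₀ = diag(±1, …, ±1), is a linear isomorphism from the space of upper triangular n × n matrices onto the space of symmetric n × n matrices. Moreover ‖Φ‖ ≤ 2 and ‖Φ⁻¹‖_F ≤ √(n(n+1)/2) (Frobenius norm bound), hence ‖Φ⁻¹‖ ≤ √(n(n+1)/2). -/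
open Matrix
open scoped Matrix.Norms.L2Operator

lemma euclid_norm_eq {n : ℕ} (v : EuclideanSpace ℝ (Fin n)) :
    ‖v‖ = Real.sqrt (∑ i, (v i)^2) := by
  rw [EuclideanSpace.norm_eq]
  congr 1
  exact Finset.sum_congr rfl fun i _ => by rw [Real.norm_eq_abs, sq_abs]

lemma aux_op_le_frob {n : ℕ} (A : Matrix (Fin n) (Fin n) ℝ) :
    ‖A‖ ≤ Real.sqrt (∑ i, ∑ j, (A i j)^2) := by
  rw [Matrix.l2_opNorm_def]
  refine ContinuousLinearMap.opNorm_le_bound _ (Real.sqrt_nonneg _) fun x => ?_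
  have hx : ‖x‖ = Real.sqrt (∑ j, (x j)^2) := euclid_norm_eq x
  have heq : ((Matrix.toEuclideanLin.trans LinearMap.toContinuousLinearMap) A) x
      = (WithLp.equiv 2 (Fin n → ℝ)).symm (A *ᵥ (WithLp.equiv 2 (Fin n → ℝ)) x) := by
    simp [LinearEquiv.trans_apply, Matrix.toEuclideanLin_apply]
  rw [heq, hx, euclid_norm_eq]
  have happ : ∀ k, ((WithLp.equiv 2 (Fin n → ℝ)).symm
      (A *ᵥ (WithLp.equiv 2 (Fin n → ℝ)) x)) k = ∑ j, A k j * x j := by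
    intro k
    simp [Matrix.mulVec, dotProduct]
  have hsum : ∑ i, (((WithLp.equiv 2 (Fin n → ℝ)).symm
      (A *ᵥ (WithLp.equiv 2 (Fin n → ℝ)) x)) i)^2
      ≤ (∑ i, ∑ j, (A i j)^2) * ∑ j, (x j)^2 := by
    rw [Finset.sum_mul]
    refine Finset.sum_le_sum fun i _ => ?_
    rw [happ i]
    exact Finset.sum_mul_sq_le_sq_mul_sq _ _ _
  calc Real.sqrt _ ≤ Real.sqrt ((∑ i, ∑ j, (A i j)^2) * ∑ j, (x j)^2) := Real.sqrt_le_sqrt hsum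
    _ = Real.sqrt (∑ i, ∑ j, (A i j)^2) * Real.sqrt (∑ j, (x j)^2) := by
        rw [Real.sqrt_mul (by positivity)]

lemma aux_entry_le {n : ℕ} (A : Matrix (Fin n) (Fin n) ℝ) (i j : Fin n) :
    |A i j| ≤ ‖A‖ := by
  have h := Matrix.l2_opNorm_mulVec A (EuclideanSpace.single j (1:ℝ))
  rw [EuclideanSpace.norm_single, norm_one, mul_one] at h
  refine le_trans ?_ h
  have hv : ∀ k, ((EuclideanSpace.equiv (Fin n) ℝ).symm
      (A *ᵥ (EuclideanSpace.single j (1:ℝ)))) k = A k j := by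
    intro k
    show (A *ᵥ (Pi.single j (1:ℝ))) k = A k j
    rw [Matrix.mulVec_single]
    simp
  rw [euclid_norm_eq]
  have h1 : (A i j)^2 ≤ ∑ k, (((EuclideanSpace.equiv (Fin n) ℝ).symm
      (A *ᵥ (EuclideanSpace.single j (1:ℝ)))) k)^2 := by
    have h2 := Finset.single_le_sum (f := fun k => (((EuclideanSpace.equiv (Fin n) ℝ).symm
      (A *ᵥ (EuclideanSpace.single j (1:ℝ)))) k)^2) (fun k _ => sq_nonneg _) (Finset.mem_univ i)
    simpa [hv i] using h2
  calc |A i j| = Real.sqrt ((A i j)^2) := (Real.sqrt_sq_eq_abs _).symm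
    _ ≤ _ := Real.sqrt_le_sqrt h1

lemma aux_diag_norm {n : ℕ} (eps : Fin n → ℝ) (h2 : ∀ i, eps i * eps i = 1) :
    ‖(Matrix.diagonal eps : Matrix (Fin n) (Fin n) ℝ)‖ ≤ 1 := by
  rw [Matrix.l2_opNorm_def]
  refine ContinuousLinearMap.opNorm_le_bound _ zero_le_one fun x => ?_
  rw [one_mul]
  have heq : ((Matrix.toEuclideanLin.trans LinearMap.toContinuousLinearMap) (Matrix.diagonal eps)) x
      = (WithLp.equiv 2 (Fin n → ℝ)).symm
        ((Matrix.diagonal eps) *ᵥ (WithLp.equiv 2 (Fin n → ℝ)) x) := by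
    simp [LinearEquiv.trans_apply, Matrix.toEuclideanLin_apply]
  rw [heq, euclid_norm_eq, euclid_norm_eq]
  refine le_of_eq (congrArg Real.sqrt ?_)
  refine Finset.sum_congr rfl fun k _ => ?_
  have : ((WithLp.equiv 2 (Fin n → ℝ)).symm
      ((Matrix.diagonal eps) *ᵥ (WithLp.equiv 2 (Fin n → ℝ)) x)) k = eps k * x k := by
    show ((Matrix.diagonal eps) *ᵥ (x : Fin n → ℝ)) k = eps k * x k
    rw [Matrix.mulVec_diagonal]
  rw [this, mul_pow, show eps k ^ 2 = 1 by rw [sq, h2 k], one_mul]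

/-- The linear map `Φ(H) = −(Hᵀ D₀ + D₀ H)`, with `D₀ = diag(±1,…,±1)`, is a linear
isomorphism from upper triangular `n × n` matrices onto symmetric `n × n` matrices,
with `‖Φ(H)‖ ≤ 2‖H‖` and `‖Φ⁻¹‖ ≤ √(n(n+1)/2)` (operator norms). -/
theorem upper_triangular_to_symmetric_iso (n : ℕ) (eps : Fin n → ℝ)
    (heps : ∀ i, eps i = 1 ∨ eps i = -1) (D₀ : Matrix (Fin n) (Fin n) ℝ)
    (hD₀ : D₀ = Matrix.diagonal eps) :
    (∀ G : Matrix (Fin n) (Fin n) ℝ, G.IsSymm →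
      ∃! H : Matrix (Fin n) (Fin n) ℝ,
        (∀ i j : Fin n, j < i → H i j = 0) ∧ -(Hᵀ * D₀ + D₀ * H) = G) ∧
    (∀ H : Matrix (Fin n) (Fin n) ℝ, (∀ i j : Fin n, j < i → H i j = 0) →
      ‖-(Hᵀ * D₀ + D₀ * H)‖ ≤ 2 * ‖H‖) ∧
    (∀ G H : Matrix (Fin n) (Fin n) ℝ, G.IsSymm → (∀ i j : Fin n, j < i → H i j = 0) →
      -(Hᵀ * D₀ + D₀ * H) = G →
      ‖H‖ ≤ Real.sqrt (n * (n + 1) / 2) * ‖G‖) := by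
  have e2 : ∀ i, eps i * eps i = 1 := by
    intro i; rcases heps i with h | h <;> rw [h] <;> norm_num
  have phi_entry : ∀ (H : Matrix (Fin n) (Fin n) ℝ) (i j : Fin n),
      (-(Hᵀ * D₀ + D₀ * H)) i j = -(H j i * eps j + eps i * H i j) := by
    intro H i j
    simp [hD₀, Matrix.mul_diagonal, Matrix.diagonal_mul, Matrix.neg_apply, Matrix.add_apply,
      Matrix.transpose_apply]
  -- key: entries of any solution are forced
  have key : ∀ (G H : Matrix (Fin n) (Fin n) ℝ), G.IsSymm →
      (∀ i j : Fin n, j < i → H i j = 0) → -(Hᵀ * D₀ + D₀ * H) = G →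
      ∀ i j, H i j = if i < j then -(eps i * G i j)
        else if i = j then -(eps i * G i j) / 2 else 0 := by
    intro G H hG hH hEq i j
    have hij := congrFun (congrFun hEq i) j
    rw [phi_entry] at hij
    rcases lt_trichotomy i j with h | h | h
    · rw [if_pos h]
      rw [hH j i h] at hij
      have h1 : eps i * H i j = -G i j := by linarith [hij]
      have h2 : H i j = eps i * (eps i * H i j) := by rw [← mul_assoc, e2 i, one_mul]
      rw [h1] at h2
      rw [h2]; ring
    · subst h
      rw [if_neg (lt_irrefl i), if_pos rfl]
      have h1 : eps i * H i i = -G i i / 2 := by linarith [hij]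
      have h2 : H i i = eps i * (eps i * H i i) := by rw [← mul_assoc, e2 i, one_mul]
      rw [h1] at h2
      rw [h2]; ring
    · rw [if_neg (not_lt.mpr h.le), if_neg (ne_of_gt h)]
      exact hH i j h
  -- existence
  have exists_sol : ∀ (G : Matrix (Fin n) (Fin n) ℝ), G.IsSymm →
      (∀ i j : Fin n, j < i →
        (Matrix.of fun i j => if i < j then -(eps i * G i j)
          else if i = j then -(eps i * G i j) / 2 else 0 : Matrix (Fin n) (Fin n) ℝ) i j = 0) ∧
      -((Matrix.of fun i j => if i < j then -(eps i * G i j)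
          else if i = j then -(eps i * G i j) / 2 else 0 : Matrix (Fin n) (Fin n) ℝ)ᵀ * D₀
        + D₀ * (Matrix.of fun i j => if i < j then -(eps i * G i j)
          else if i = j then -(eps i * G i j) / 2 else 0 : Matrix (Fin n) (Fin n) ℝ)) = G := by
    intro G hG
    set H : Matrix (Fin n) (Fin n) ℝ := Matrix.of fun i j => if i < j then -(eps i * G i j)
      else if i = j then -(eps i * G i j) / 2 else 0 with hHdef
    have hup : ∀ i j : Fin n, j < i → H i j = 0 := by
      intro i j h
      simp only [hHdef, Matrix.of_apply, if_neg (not_lt.mpr h.le), if_neg (ne_of_gt h)]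
    refine ⟨hup, ?_⟩
    ext i j
    rw [phi_entry]
    have hsym : G j i = G i j := by rw [← hG.apply i j]
    have hHe : ∀ a b : Fin n, H a b = if a < b then -(eps a * G a b)
        else if a = b then -(eps a * G a b) / 2 else 0 := fun a b => rfl
    rcases lt_trichotomy i j with h | h | h
    · rw [hup j i h, hHe i j, if_pos h]
      linear_combination G i j * e2 i
    · subst h
      rw [hHe i i, if_neg (lt_irrefl i), if_pos rfl]
      linear_combination G i i * e2 i
    · rw [hup i j h, hHe j i, if_pos h]
      linear_combination G j i * e2 j + hsym
  refine ⟨?_, ?_, ?_⟩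
  · -- unique existence
    intro G hG
    obtain ⟨h1, h2⟩ := exists_sol G hG
    refine ⟨_, ⟨h1, h2⟩, ?_⟩
    intro H' ⟨hup', heq'⟩
    ext i j
    rw [key G H' hG hup' heq' i j]
    rfl
  · -- norm bound for Φ
    intro H _
    have hDn : ‖D₀‖ ≤ 1 := hD₀ ▸ aux_diag_norm eps e2
    have hT : ‖Hᵀ‖ = ‖H‖ := by
      have : Hᵀ = Hᴴ := by
        ext i j; simp [Matrix.conjTranspose_apply]
      rw [this, Matrix.l2_opNorm_conjTranspose]
    have b1 : ‖Hᵀ * D₀‖ ≤ ‖H‖ := by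
      calc ‖Hᵀ * D₀‖ ≤ ‖Hᵀ‖ * ‖D₀‖ := Matrix.l2_opNorm_mul _ _
        _ ≤ ‖H‖ * 1 := by rw [hT]; exact mul_le_mul_of_nonneg_left hDn (norm_nonneg _)
        _ = ‖H‖ := mul_one _
    have b2 : ‖D₀ * H‖ ≤ ‖H‖ := by
      calc ‖D₀ * H‖ ≤ ‖D₀‖ * ‖H‖ := Matrix.l2_opNorm_mul _ _
        _ ≤ 1 * ‖H‖ := mul_le_mul_of_nonneg_right hDn (norm_nonneg _)
        _ = ‖H‖ := one_mul _
    calc ‖-(Hᵀ * D₀ + D₀ * H)‖ = ‖Hᵀ * D₀ + D₀ * H‖ := norm_neg _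
      _ ≤ ‖Hᵀ * D₀‖ + ‖D₀ * H‖ := norm_add_le _ _
      _ ≤ 2 * ‖H‖ := by linarith
  · -- inverse norm bound
    intro G H hG hup heq
    have hk := key G H hG hup heq
    have hentry : ∀ i j, (H i j)^2 ≤ if i ≤ j then ‖G‖^2 else 0 := by
      intro i j
      have hGij : |G i j| ≤ ‖G‖ := aux_entry_le G i j
      have hGsq : (G i j)^2 ≤ ‖G‖^2 := by
        rw [← sq_abs]
        exact pow_le_pow_left₀ (abs_nonneg _) hGij 2
      rcases lt_trichotomy i j with h | h | h
      · rw [if_pos h.le, hk i j, if_pos h, neg_pow, mul_pow]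
        have : eps i ^ 2 = 1 := by rw [sq, e2 i]
        nlinarith
      · subst h
        rw [if_pos le_rfl, hk i i, if_neg (lt_irrefl i), if_pos rfl]
        have : eps i ^ 2 = 1 := by rw [sq, e2 i]
        have h4 : (-(eps i * G i i) / 2)^2 = eps i ^2 * (G i i)^2 / 4 := by ring
        nlinarith
      · rw [if_neg (not_le.mpr h), hup i j h]
        norm_num
    -- count
    have Ssum : ∑ i : Fin n, ∑ j : Fin n, (if i ≤ j then (1:ℝ) else 0) = n * (n + 1) / 2 := by
      have hswap : (∑ i : Fin n, ∑ j : Fin n, (if j ≤ i then (1:ℝ) else 0))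
          = ∑ i : Fin n, ∑ j : Fin n, (if i ≤ j then (1:ℝ) else 0) := by exact Finset.sum_comm ..
      have hdouble : (∑ i : Fin n, ∑ j : Fin n, (if i ≤ j then (1:ℝ) else 0))
          + ∑ i : Fin n, ∑ j : Fin n, (if j ≤ i then (1:ℝ) else 0) = (n : ℝ)^2 + n := by
        rw [← Finset.sum_add_distrib]
        have : ∀ i : Fin n, (∑ j : Fin n, (if i ≤ j then (1:ℝ) else 0))
            + ∑ j : Fin n, (if j ≤ i then (1:ℝ) else 0)
            = ∑ j : Fin n, ((1:ℝ) + if i = j then 1 else 0) := by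
          intro i
          rw [← Finset.sum_add_distrib]
          refine Finset.sum_congr rfl fun j _ => ?_
          rcases lt_trichotomy i j with h | h | h
          · simp [h.le, not_le.mpr h, h.ne]
          · subst h; simp
          · simp [h.le, not_le.mpr h, ne_of_gt h]
        rw [Finset.sum_congr rfl fun i _ => this i]
        simp [Finset.sum_add_distrib, Finset.sum_ite_eq]
        ring
      have hexp : (n : ℝ) * (n + 1) = (n : ℝ)^2 + n := by ring
      linarith
    have hb : ∑ i : Fin n, ∑ j : Fin n, (H i j)^2 ≤ n * (n + 1) / 2 * ‖G‖^2 := by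
      calc ∑ i : Fin n, ∑ j : Fin n, (H i j)^2
          ≤ ∑ i : Fin n, ∑ j : Fin n, (if i ≤ j then ‖G‖^2 else 0) :=
            Finset.sum_le_sum fun i _ => Finset.sum_le_sum fun j _ => hentry i j
        _ = ∑ i : Fin n, ∑ j : Fin n, ‖G‖^2 * (if i ≤ j then (1:ℝ) else 0) := by
            refine Finset.sum_congr rfl fun i _ => Finset.sum_congr rfl fun j _ => ?_
            rcases le_or_gt i j with h | h <;> simp [h, not_le.mpr]
        _ = ‖G‖^2 * ∑ i : Fin n, ∑ j : Fin n, (if i ≤ j then (1:ℝ) else 0) := by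
            simp_rw [← Finset.mul_sum]
        _ = n * (n + 1) / 2 * ‖G‖^2 := by rw [Ssum]; ring
    calc ‖H‖ ≤ Real.sqrt (∑ i, ∑ j, (H i j)^2) := aux_op_le_frob H
      _ ≤ Real.sqrt (n * (n + 1) / 2 * ‖G‖^2) := Real.sqrt_le_sqrt hb
      _ = Real.sqrt (n * (n + 1) / 2) * ‖G‖ := by
          rw [Real.sqrt_mul (by positivity), Real.sqrt_sq (norm_nonneg _)]
end

section
/- (Quantitative Splitting Lemma, structure of the remainder) Let f : U → ℝ be C^k (k ≥ 3) near 0 in ℝᵖ × ℝ^q with f(0) = 0, Df(0) = 0, and the p × p block ∂²f/∂x²(0,0) invertible while rank D²f(0) = p. Suppose g : B(0, δ₁) ⊆ ℝ^q → ℝᵖ is a C^{k−1} map with g(0) = 0 and ∂f/∂x(g(y), y) = 0 for all y. Then α(y) := f(g(y), y) is of class C^k (not merely C^{k−1}), and α(0) = 0, Dα(0) = 0, D²α(0) = 0. -/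
open Metric Matrix Module

section SchurAux

lemma schur_zero' {p q : ℕ} (A : Matrix (Fin p) (Fin p) ℝ) (B : Matrix (Fin p) (Fin q) ℝ)
    (C : Matrix (Fin q) (Fin p) ℝ) (D : Matrix (Fin q) (Fin q) ℝ)
    (hA : IsUnit A) (hr : (Matrix.fromBlocks A B C D).rank = p) :
    D = C * A⁻¹ * B := by
  have hAdet : IsUnit A.det := (Matrix.isUnit_iff_isUnit_det A).1 hA
  have hAinv : A⁻¹ * A = 1 := Matrix.nonsing_inv_mul A hAdet
  have hAinv' : A * A⁻¹ = 1 := Matrix.mul_nonsing_inv A hAdet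
  have hcancel : ∀ x : Fin p → ℝ, A *ᵥ x = 0 → x = 0 := by
    intro x hx
    have : A⁻¹ *ᵥ (A *ᵥ x) = x := by
      rw [Matrix.mulVec_mulVec, hAinv, Matrix.one_mulVec]
    rw [hx, Matrix.mulVec_zero] at this
    exact this.symm
  set M := Matrix.fromBlocks A B C D with hM
  let J : (Fin p → ℝ) →ₗ[ℝ] (Fin p ⊕ Fin q → ℝ) :=
    { toFun := fun x => Sum.elim x 0
      map_add' := by intro x y; funext a; cases a <;> simp
      map_smul' := by intro c x; funext a; cases a <;> simp }
  let T := M.mulVecLin.comp J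
  have hT : ∀ x, T x = Sum.elim (A *ᵥ x) (C *ᵥ x) := by
    intro x
    show M *ᵥ Sum.elim x 0 = _
    rw [hM, Matrix.fromBlocks_mulVec]
    simp
  have hTinj : Function.Injective T := by
    rw [← LinearMap.ker_eq_bot, LinearMap.ker_eq_bot']
    intro x hx
    rw [hT] at hx
    apply hcancel
    funext i
    exact congrFun hx (Sum.inl i)
  have hrange : LinearMap.range T = LinearMap.range M.mulVecLin := by
    apply Submodule.eq_of_le_of_finrank_le (LinearMap.range_comp_le_range _ _)
    have h1 : finrank ℝ (LinearMap.range T) = p := by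
      rw [LinearMap.finrank_range_of_inj hTinj]
      simp
    rw [h1]
    exact le_of_eq hr
  set S := D - C * A⁻¹ * B with hS
  have hSy : ∀ y : Fin q → ℝ, S *ᵥ y = 0 := by
    intro y
    have hmem : M *ᵥ (Sum.elim (-(A⁻¹ *ᵥ (B *ᵥ y))) y) ∈ LinearMap.range M.mulVecLin :=
      ⟨_, rfl⟩
    rw [← hrange] at hmem
    obtain ⟨x, hx⟩ := hmem
    rw [hT] at hx
    have hMw : M *ᵥ (Sum.elim (-(A⁻¹ *ᵥ (B *ᵥ y))) y)
        = Sum.elim (0 : Fin p → ℝ) (S *ᵥ y) := by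
      rw [hM, Matrix.fromBlocks_mulVec]
      simp only [Sum.elim_comp_inl, Sum.elim_comp_inr]
      rw [Matrix.mulVec_neg, Matrix.mulVec_mulVec, hAinv', Matrix.one_mulVec,
        neg_add_cancel]
      simp only [hS, Matrix.sub_mulVec, Matrix.mulVec_neg, Matrix.mulVec_mulVec,
        Matrix.mul_assoc]
      abel_nf
    rw [hMw] at hx
    have hx1 : A *ᵥ x = 0 := funext fun i => congrFun hx (Sum.inl i)
    have hx0 : x = 0 := hcancel x hx1
    have hx2 : C *ᵥ x = S *ᵥ y := funext fun i => congrFun hx (Sum.inr i)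
    rw [hx0, Matrix.mulVec_zero] at hx2
    exact hx2.symm
  have hS0 : S = 0 := by
    ext i j
    simpa using congrFun (hSy (Pi.single j 1)) i
  rw [hS, sub_eq_zero] at hS0
  exact hS0

end SchurAux

set_option maxHeartbeats 2000000 in
/-- Splitting lemma, structure of the remainder: if `f` is `C^k` (`k ≥ 3`) near `0`
in `ℝᵖ × ℝ^q` with `f(0) = 0`, `Df(0) = 0`, the `x`-block of the Hessian invertible
and `rank D²f(0) = p`, and `g` is a `C^{k-1}` map with `g(0) = 0` and
`∂f/∂x(g(y), y) = 0`, then `α(y) = f(g(y), y)` is of class `C^k` (not merely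
`C^{k-1}`) with `α(0) = 0`, `Dα(0) = 0`, `D²α(0) = 0`. -/
theorem splitting_lemma_remainder (p q k : ℕ) (hk : 3 ≤ k)
    (f : EuclideanSpace ℝ (Fin p) × EuclideanSpace ℝ (Fin q) → ℝ)
    (hf : ContDiff ℝ k f) (hf0 : f 0 = 0) (hDf0 : fderiv ℝ f 0 = 0)
    (Hm : Matrix (Fin p ⊕ Fin q) (Fin p ⊕ Fin q) ℝ)
    (hHm : ∀ a b : Fin p ⊕ Fin q, Hm a b =
      iteratedFDeriv ℝ 2 f 0
        ![Sum.elim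
            (fun i => ((EuclideanSpace.single i 1 : EuclideanSpace ℝ (Fin p)),
              (0 : EuclideanSpace ℝ (Fin q))))
            (fun j => (0, EuclideanSpace.single j 1)) a,
          Sum.elim
            (fun i => ((EuclideanSpace.single i 1 : EuclideanSpace ℝ (Fin p)),
              (0 : EuclideanSpace ℝ (Fin q))))
            (fun j => (0, EuclideanSpace.single j 1)) b])
    (hrank : Hm.rank = p) (hblock : IsUnit (Matrix.toBlocks₁₁ Hm))
    (δ₁ : ℝ) (hδ₁ : 0 < δ₁)
    (g : EuclideanSpace ℝ (Fin q) → EuclideanSpace ℝ (Fin p))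
    (hg : ContDiffOn ℝ (k - 1) g (ball 0 δ₁)) (hg0 : g 0 = 0)
    (hgx : ∀ y ∈ ball (0 : EuclideanSpace ℝ (Fin q)) δ₁,
      fderiv ℝ (fun x => f (x, y)) (g y) = 0) :
    ContDiffOn ℝ k (fun y => f (g y, y)) (ball 0 δ₁) ∧
    f (g 0, 0) = 0 ∧
    fderivWithin ℝ (fun y => f (g y, y)) (ball 0 δ₁) 0 = 0 ∧
    iteratedFDerivWithin ℝ 2 (fun y => f (g y, y)) (ball 0 δ₁) 0 = 0 := by
  set s := ball (0 : EuclideanSpace ℝ (Fin q)) δ₁ with hsdef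
  have hsOpen : IsOpen s := isOpen_ball
  have h0s : (0 : EuclideanSpace ℝ (Fin q)) ∈ s := mem_ball_self hδ₁
  -- cast bookkeeping
  have hsub : ((k : WithTop ℕ∞) - 1) = ((k - 1 : ℕ) : WithTop ℕ∞) := by
    norm_cast
  rw [hsub] at hg
  have hk1 : ((k - 1 : ℕ) : WithTop ℕ∞) + 1 = (k : WithTop ℕ∞) := by
    norm_cast
    omega
  have h1k : (1 : WithTop ℕ∞) ≤ (k : ℕ) := by
    norm_cast
    omega
  have h2k : (2 : WithTop ℕ∞) ≤ (k : ℕ) := by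
    norm_cast
    omega
  have h1k' : (1 : WithTop ℕ∞) ≤ ((k - 1 : ℕ) : WithTop ℕ∞) := by
    norm_cast
    omega
  -- differentiability facts
  have hfd : Differentiable ℝ f := hf.differentiable (by norm_cast; omega)
  have hfdc : ContDiff ℝ ((k - 1 : ℕ) : WithTop ℕ∞) (fderiv ℝ f) :=
    hf.fderiv_right (le_of_eq hk1)
  have hfd2 : Differentiable ℝ (fderiv ℝ f) := hfdc.differentiable (by norm_cast; omega)
  have hgd : ∀ y ∈ s, DifferentiableAt ℝ g y := fun y hy =>
    (hg.differentiableOn (by norm_cast; omega)).differentiableAt (hsOpen.mem_nhds hy)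
  -- the x-partial vanishes along the graph of g, as a composed linear map
  have hDf_inl : ∀ y ∈ s,
      (fderiv ℝ f (g y, y)).comp
        (ContinuousLinearMap.inl ℝ (EuclideanSpace ℝ (Fin p)) (EuclideanSpace ℝ (Fin q))) = 0 := by
    intro y hy
    have h1 : HasFDerivAt (fun x : EuclideanSpace ℝ (Fin p) => f (x, y))
        ((fderiv ℝ f (g y, y)).comp
          (ContinuousLinearMap.inl ℝ (EuclideanSpace ℝ (Fin p)) (EuclideanSpace ℝ (Fin q))))
        (g y) :=
      (hfd (g y, y)).hasFDerivAt.comp (g y) (hasFDerivAt_prodMk_left (g y) y)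
    rw [← h1.fderiv]
    exact hgx y hy
  -- candidate derivative of α
  set φ : EuclideanSpace ℝ (Fin q) → (EuclideanSpace ℝ (Fin q) →L[ℝ] ℝ) := fun y =>
    (fderiv ℝ f (g y, y)).comp
      (ContinuousLinearMap.inr ℝ (EuclideanSpace ℝ (Fin p)) (EuclideanSpace ℝ (Fin q))) with hφ
  have hα : ∀ y ∈ s, HasFDerivAt (fun y => f (g y, y)) (φ y) y := by
    intro y hy
    have hc := HasFDerivAt.comp (f := fun z : EuclideanSpace ℝ (Fin q) => (g z, z)) y
        (hfd (g y, y)).hasFDerivAt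
        (HasFDerivAt.prodMk ((hgd y hy).hasFDerivAt) (hasFDerivAt_id y))
    have hc' : HasFDerivAt (fun y => f (g y, y))
        ((fderiv ℝ f (g y, y)).comp
          ((fderiv ℝ g y).prod (ContinuousLinearMap.id ℝ (EuclideanSpace ℝ (Fin q))))) y := hc
    have heq : (fderiv ℝ f (g y, y)).comp
        ((fderiv ℝ g y).prod (ContinuousLinearMap.id ℝ (EuclideanSpace ℝ (Fin q)))) = φ y := by
      ext v
      simp only [ContinuousLinearMap.comp_apply, ContinuousLinearMap.prod_apply,
        ContinuousLinearMap.id_apply, hφ, ContinuousLinearMap.inr_apply]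
      have h2 : ((fderiv ℝ g y v : EuclideanSpace ℝ (Fin p)), (v : EuclideanSpace ℝ (Fin q)))
          = (fderiv ℝ g y v, 0) + (0, v) := by simp
      rw [h2, map_add]
      have h3 : fderiv ℝ f (g y, y) (fderiv ℝ g y v, 0) = 0 := by
        have := ContinuousLinearMap.ext_iff.1 (hDf_inl y hy) (fderiv ℝ g y v)
        simpa using this
      rw [h3, zero_add]
    rw [← heq]
    exact hc'
  -- φ is C^{k-1}
  have hhc : ContDiffOn ℝ ((k - 1 : ℕ) : WithTop ℕ∞) (fun y => ((g y), y)) s :=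
    hg.prodMk contDiffOn_id
  have hφc : ContDiffOn ℝ ((k - 1 : ℕ) : WithTop ℕ∞) φ s := by
    have h1 : ContDiffOn ℝ ((k - 1 : ℕ) : WithTop ℕ∞)
        (fun y => fderiv ℝ f (g y, y)) s := hfdc.comp_contDiffOn hhc
    exact h1.clm_comp contDiffOn_const
  -- first conclusion
  have hmain : ContDiffOn ℝ (k : ℕ) (fun y => f (g y, y)) s := by
    rw [← hk1, contDiffOn_succ_iff_fderiv_of_isOpen hsOpen]
    refine ⟨fun y hy => (hα y hy).differentiableAt.differentiableWithinAt, by simp, ?_⟩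
    exact hφc.congr fun y hy => (hα y hy).fderiv
  refine ⟨hmain, ?_, ?_, ?_⟩
  · rw [hg0]; exact hf0
  · rw [fderivWithin_of_isOpen hsOpen h0s, (hα 0 h0s).fderiv]
    have h00 : ((g 0 : EuclideanSpace ℝ (Fin p)), (0 : EuclideanSpace ℝ (Fin q)))
        = (0 : EuclideanSpace ℝ (Fin p) × EuclideanSpace ℝ (Fin q)) := by rw [hg0]; rfl
    rw [hφ]
    show (fderiv ℝ f (g 0, 0)).comp
      (ContinuousLinearMap.inr ℝ (EuclideanSpace ℝ (Fin p)) (EuclideanSpace ℝ (Fin q))) = 0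
    rw [h00, hDf0, ContinuousLinearMap.zero_comp]
  · -- second derivative vanishes
    have hh0 : HasFDerivAt (fun z : EuclideanSpace ℝ (Fin q) => ((g z), z))
        ((fderiv ℝ g 0).prod (ContinuousLinearMap.id ℝ (EuclideanSpace ℝ (Fin q)))) 0 :=
      HasFDerivAt.prodMk ((hgd 0 h0s).hasFDerivAt) (hasFDerivAt_id 0)
    set G0 := fderiv ℝ g 0 with hG0
    set Dh0 := G0.prod (ContinuousLinearMap.id ℝ (EuclideanSpace ℝ (Fin q))) with hDh0
    set H := fderiv ℝ (fderiv ℝ f) 0 with hH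
    have h00 : ((g 0), (0 : EuclideanSpace ℝ (Fin q)))
        = (0 : EuclideanSpace ℝ (Fin p) × EuclideanSpace ℝ (Fin q)) := by rw [hg0]; rfl
    have hHd : HasFDerivAt (fderiv ℝ f) H ((g 0), 0) := by
      rw [h00]; exact (hfd2 0).hasFDerivAt
    have h1 : HasFDerivAt (fun z => fderiv ℝ f (g z, z)) (H.comp Dh0) 0 :=
      HasFDerivAt.comp (f := fun z : EuclideanSpace ℝ (Fin q) => ((g z), z)) 0 hHd hh0
    set Λ : ((EuclideanSpace ℝ (Fin p) × EuclideanSpace ℝ (Fin q)) →L[ℝ] ℝ) →L[ℝ]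
        (EuclideanSpace ℝ (Fin q) →L[ℝ] ℝ) :=
      (ContinuousLinearMap.compL ℝ (EuclideanSpace ℝ (Fin q))
        (EuclideanSpace ℝ (Fin p) × EuclideanSpace ℝ (Fin q)) ℝ).flip
        (ContinuousLinearMap.inr ℝ _ _) with hΛ
    set Λ' : ((EuclideanSpace ℝ (Fin p) × EuclideanSpace ℝ (Fin q)) →L[ℝ] ℝ) →L[ℝ]
        (EuclideanSpace ℝ (Fin p) →L[ℝ] ℝ) :=
      (ContinuousLinearMap.compL ℝ (EuclideanSpace ℝ (Fin p))
        (EuclideanSpace ℝ (Fin p) × EuclideanSpace ℝ (Fin q)) ℝ).flip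
        (ContinuousLinearMap.inl ℝ _ _) with hΛ'
    have hφder : HasFDerivAt φ (Λ.comp (H.comp Dh0)) 0 := by
      have h2 := Λ.hasFDerivAt.comp (0 : EuclideanSpace ℝ (Fin q)) h1
      have h3 : φ = Λ ∘ (fun z => fderiv ℝ f (g z, z)) := by
        funext z
        ext w
        simp [hφ, hΛ, ContinuousLinearMap.compL_apply]
      rw [h3]
      exact h2
    -- part (A): differentiate the vanishing x-partial along the graph
    have hψ0 : (fun y => Λ' (fderiv ℝ f (g y, y)))
        =ᶠ[nhds (0 : EuclideanSpace ℝ (Fin q))] (fun _ => 0) := by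
      filter_upwards [hsOpen.mem_nhds h0s] with y hy
      have h4 := hDf_inl y hy
      simp only [hΛ', ContinuousLinearMap.flip_apply, ContinuousLinearMap.compL_apply]
      exact h4
    have hψder : HasFDerivAt (fun y => Λ' (fderiv ℝ f (g y, y))) (Λ'.comp (H.comp Dh0)) 0 :=
      Λ'.hasFDerivAt.comp (0 : EuclideanSpace ℝ (Fin q)) h1
    have hAzero : Λ'.comp (H.comp Dh0) = 0 := by
      have hconst : HasFDerivAt (fun _ : EuclideanSpace ℝ (Fin q) =>
          (0 : EuclideanSpace ℝ (Fin p) →L[ℝ] ℝ))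
          (0 : EuclideanSpace ℝ (Fin q) →L[ℝ] (EuclideanSpace ℝ (Fin p) →L[ℝ] ℝ)) 0 :=
        hasFDerivAt_const _ _
      exact hψder.unique (hconst.congr_of_eventuallyEq hψ0)
    have hAvu : ∀ (v : EuclideanSpace ℝ (Fin q)) (u : EuclideanSpace ℝ (Fin p)),
        H (G0 v, v) (u, (0 : EuclideanSpace ℝ (Fin q))) = 0 := by
      intro v u
      have h5 : (Λ'.comp (H.comp Dh0)) v u = 0 := by rw [hAzero]; rfl
      simpa only [hΛ', hDh0, ContinuousLinearMap.comp_apply, ContinuousLinearMap.flip_apply,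
        ContinuousLinearMap.compL_apply, ContinuousLinearMap.prod_apply,
        ContinuousLinearMap.id_apply, ContinuousLinearMap.inl_apply] using h5
    -- basis / matrix translation
    have hHb : ∀ a b : Fin p ⊕ Fin q, Hm a b =
        H (Sum.elim
            (fun i => ((EuclideanSpace.single i 1 : EuclideanSpace ℝ (Fin p)),
              (0 : EuclideanSpace ℝ (Fin q))))
            (fun j => (0, EuclideanSpace.single j 1)) a)
          (Sum.elim
            (fun i => ((EuclideanSpace.single i 1 : EuclideanSpace ℝ (Fin p)),
              (0 : EuclideanSpace ℝ (Fin q))))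
            (fun j => (0, EuclideanSpace.single j 1)) b) := by
      intro a b
      rw [hHm a b, iteratedFDeriv_two_apply, ← hH]
      simp
    set Am := Matrix.toBlocks₁₁ Hm with hAm
    set Bm := Matrix.toBlocks₁₂ Hm with hBm
    set Cm := Matrix.toBlocks₂₁ Hm with hCm
    set Dm := Matrix.toBlocks₂₂ Hm with hDmdef
    have hDm : Dm = Cm * Am⁻¹ * Bm :=
      schur_zero' Am Bm Cm Dm hblock (by rw [Matrix.fromBlocks_toBlocks]; exact hrank)
    have hAmdet : IsUnit Am.det := (Matrix.isUnit_iff_isUnit_det Am).1 hblock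
    set Gmat : Matrix (Fin p) (Fin q) ℝ :=
      Matrix.of (fun i j => (G0 (EuclideanSpace.single j 1)) i) with hGmat
    have hxE : ∀ x : EuclideanSpace ℝ (Fin p),
        x = ∑ i, x i • EuclideanSpace.single i 1 := by
      intro x
      have h6 := (EuclideanSpace.basisFun (Fin p) ℝ).sum_repr x
      nth_rewrite 1 [← h6]
      exact Finset.sum_congr rfl fun i _ => by
        rw [EuclideanSpace.basisFun_apply, EuclideanSpace.basisFun_repr]
    have hxF : ∀ x : EuclideanSpace ℝ (Fin q),
        x = ∑ j, x j • EuclideanSpace.single j 1 := by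
      intro x
      have h6 := (EuclideanSpace.basisFun (Fin q) ℝ).sum_repr x
      nth_rewrite 1 [← h6]
      exact Finset.sum_congr rfl fun i _ => by
        rw [EuclideanSpace.basisFun_apply, EuclideanSpace.basisFun_repr]
    have hexp : ∀ (j : Fin q) (z : EuclideanSpace ℝ (Fin p) × EuclideanSpace ℝ (Fin q)),
        H (G0 (EuclideanSpace.single j 1), EuclideanSpace.single j 1) z
          = (∑ i, Gmat i j *
              H ((EuclideanSpace.single i 1 : EuclideanSpace ℝ (Fin p)),
                (0 : EuclideanSpace ℝ (Fin q))) z)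
            + H ((0 : EuclideanSpace ℝ (Fin p)),
                (EuclideanSpace.single j 1 : EuclideanSpace ℝ (Fin q))) z := by
      intro j z
      have e2 : ((G0 (EuclideanSpace.single j 1) : EuclideanSpace ℝ (Fin p)),
            (EuclideanSpace.single j 1 : EuclideanSpace ℝ (Fin q)))
          = (∑ i, Gmat i j • ((EuclideanSpace.single i 1 : EuclideanSpace ℝ (Fin p)),
              (0 : EuclideanSpace ℝ (Fin q))))
            + ((0 : EuclideanSpace ℝ (Fin p)),
              (EuclideanSpace.single j 1 : EuclideanSpace ℝ (Fin q))) := by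
        rw [Prod.ext_iff]
        constructor
        · simp only [Prod.fst_add, Prod.fst_sum, Prod.smul_fst, add_zero]
          exact hxE (G0 (EuclideanSpace.single j 1))
        · simp only [Prod.snd_add, Prod.snd_sum, Prod.smul_snd, smul_zero,
            Finset.sum_const_zero, zero_add]
      rw [e2, map_add, map_sum, ContinuousLinearMap.add_apply, ContinuousLinearMap.sum_apply]
      congr 1
      refine Finset.sum_congr rfl fun i _ => ?_
      simp only [_root_.map_smul, ContinuousLinearMap.smul_apply, smul_eq_mul]
    have hGA : Gmatᵀ * Am = -Cm := by
      ext j i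
      have h7 := hAvu (EuclideanSpace.single j 1) (EuclideanSpace.single i 1)
      rw [hexp j (EuclideanSpace.single i 1, 0)] at h7
      simp only [show ∀ i' : Fin p,
          H ((EuclideanSpace.single i' 1 : EuclideanSpace ℝ (Fin p)),
              (0 : EuclideanSpace ℝ (Fin q)))
            ((EuclideanSpace.single i 1 : EuclideanSpace ℝ (Fin p)),
              (0 : EuclideanSpace ℝ (Fin q))) = Am i' i
          from fun i' => (hHb (Sum.inl i') (Sum.inl i)).symm,
        show H ((0 : EuclideanSpace ℝ (Fin p)),
              (EuclideanSpace.single j 1 : EuclideanSpace ℝ (Fin q)))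
            ((EuclideanSpace.single i 1 : EuclideanSpace ℝ (Fin p)),
              (0 : EuclideanSpace ℝ (Fin q))) = Cm j i
          from (hHb (Sum.inr j) (Sum.inl i)).symm] at h7
      simp only [Matrix.mul_apply, Matrix.transpose_apply, Matrix.neg_apply]
      linarith [h7]
    have hGB : ∀ (j j' : Fin q), (∑ i, Gmat i j * Bm i j') + Dm j j' = 0 := by
      intro j j'
      have hGmT : Gmatᵀ = -(Cm * Am⁻¹) := by
        calc Gmatᵀ = Gmatᵀ * (Am * Am⁻¹) := by
              rw [Matrix.mul_nonsing_inv Am hAmdet, Matrix.mul_one]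
        _ = (Gmatᵀ * Am) * Am⁻¹ := by rw [Matrix.mul_assoc]
        _ = -Cm * Am⁻¹ := by rw [hGA]
        _ = -(Cm * Am⁻¹) := by rw [Matrix.neg_mul]
      have h8 : Gmatᵀ * Bm = -Dm := by rw [hGmT, Matrix.neg_mul, ← hDm]
      have h9 := congrFun (congrFun h8 j) j'
      simp only [Matrix.mul_apply, Matrix.transpose_apply, Matrix.neg_apply] at h9
      linarith [h9]
    have claimB : ∀ (j j' : Fin q),
        H (G0 (EuclideanSpace.single j 1), EuclideanSpace.single j 1)
          ((0 : EuclideanSpace ℝ (Fin p)),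
            (EuclideanSpace.single j' 1 : EuclideanSpace ℝ (Fin q))) = 0 := by
      intro j j'
      rw [hexp]
      simp only [show ∀ i : Fin p,
          H ((EuclideanSpace.single i 1 : EuclideanSpace ℝ (Fin p)),
              (0 : EuclideanSpace ℝ (Fin q)))
            ((0 : EuclideanSpace ℝ (Fin p)),
              (EuclideanSpace.single j' 1 : EuclideanSpace ℝ (Fin q))) = Bm i j'
          from fun i => (hHb (Sum.inl i) (Sum.inr j')).symm,
        show H ((0 : EuclideanSpace ℝ (Fin p)),
              (EuclideanSpace.single j 1 : EuclideanSpace ℝ (Fin q)))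
            ((0 : EuclideanSpace ℝ (Fin p)),
              (EuclideanSpace.single j' 1 : EuclideanSpace ℝ (Fin q))) = Dm j j'
          from (hHb (Sum.inr j) (Sum.inr j')).symm]
      exact hGB j j'
    have hfinal : ∀ (v w : EuclideanSpace ℝ (Fin q)),
        H (G0 v, v) ((0 : EuclideanSpace ℝ (Fin p)), w) = 0 := by
      intro v w
      have hv : ((G0 v : EuclideanSpace ℝ (Fin p)), (v : EuclideanSpace ℝ (Fin q)))
          = ∑ j, v j • ((G0 (EuclideanSpace.single j 1) : EuclideanSpace ℝ (Fin p)),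
              (EuclideanSpace.single j 1 : EuclideanSpace ℝ (Fin q))) := by
        rw [Prod.ext_iff]
        constructor
        · simp only [Prod.fst_sum, Prod.smul_fst]
          conv_lhs => rw [hxF v, map_sum]
          exact Finset.sum_congr rfl fun j _ => G0.map_smul _ _
        · simp only [Prod.snd_sum, Prod.smul_snd]
          exact hxF v
      have hw : ((0 : EuclideanSpace ℝ (Fin p)), (w : EuclideanSpace ℝ (Fin q)))
          = ∑ j', w j' • ((0 : EuclideanSpace ℝ (Fin p)),
              (EuclideanSpace.single j' 1 : EuclideanSpace ℝ (Fin q))) := by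
        rw [Prod.ext_iff]
        constructor
        · simp only [Prod.fst_sum, Prod.smul_fst, smul_zero, Finset.sum_const_zero]
        · simp only [Prod.snd_sum, Prod.smul_snd]
          exact hxF w
      rw [hv, hw]
      simp only [map_sum, _root_.map_smul, ContinuousLinearMap.sum_apply,
        ContinuousLinearMap.smul_apply, smul_eq_mul, claimB, mul_zero,
        Finset.sum_const_zero]
    -- wrap up
    have e1 : Set.EqOn (fderivWithin ℝ (fun y => f (g y, y)) s) φ s := fun y hy =>
      (fderivWithin_of_isOpen hsOpen hy).trans (hα y hy).fderiv
    ext m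
    rw [iteratedFDerivWithin_two_apply _ hsOpen.uniqueDiffOn h0s,
      fderivWithin_congr e1 (e1 h0s), fderivWithin_of_isOpen hsOpen h0s, hφder.fderiv]
    have h10 := hfinal (m 0) (m 1)
    simpa only [hΛ, hDh0, ContinuousLinearMap.comp_apply, ContinuousLinearMap.flip_apply,
      ContinuousLinearMap.compL_apply, ContinuousLinearMap.prod_apply,
      ContinuousLinearMap.id_apply, ContinuousLinearMap.inr_apply,
      ContinuousMultilinearMap.zero_apply] using h10
end
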